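/- arXiv:1410.3155 — 2 statements merged into one kernel-verified Lean document; each statement's English description precedes it below -/
import Mathlib

section
/- Let 1 ≤ j ≤ i ≤ n be integers and let γ0 > 0, a < 1, 0 < p < 1 be real. Then the sum of w_n(π) over all set partitions π of {1,…,n} whose restriction to {1,…,i} has exactly j blocks equals γ0^j · p^{−a·j} · S_a(i,j) · R_{n,γ0,a,p}(i,j) / D_n (the distribution of the number of clusters among the first i elements in a sample of size n). -/
open scoped Classical BigOperators

/-- Generalized Stirling numbers of the first kind:
`S_a(n,l) = (n!/l!) · Σ over compositions of n into l positive parts of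
∏ Γ(n_k − a)/(n_k!·Γ(1−a))`. -/
noncomputable def genStirling (a : ℝ) (n l : ℕ) : ℝ :=
  (n.factorial : ℝ) / (l.factorial : ℝ) *
    ∑ f ∈ (Finset.Nat.antidiagonalTuple l n).filter (fun f => ∀ k, 0 < f k),
      ∏ k, Real.Gamma ((f k : ℝ) - a) / ((f k).factorial * Real.Gamma (1 - a))

/-- `D_n = Σ_{ℓ=0}^n γ0^ℓ · p^{−a·ℓ} · S_a(n,ℓ)`. -/
noncomputable def Dsum (γ0 a p : ℝ) (n : ℕ) : ℝ :=
  ∑ l ∈ Finset.range (n + 1), γ0 ^ l * p ^ (-(a * (l : ℝ))) * genStirling a n l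

/-- A finite family of blocks forming a set partition of `Fin n`. -/
def IsPartition {n : ℕ} (P : Finset (Finset (Fin n))) : Prop :=
  ∅ ∉ P ∧ ∀ x : Fin n, ∃! B, B ∈ P ∧ x ∈ B

/-- The finite set of all set partitions of `{1,…,n}` (modeled as `Fin n`). -/
noncomputable def partitionsOf (n : ℕ) : Finset (Finset (Finset (Fin n))) :=
  Finset.univ.filter IsPartition

/-- The generalized Chinese restaurant sampling formula weight of a family of blocks
`P`, for sample size `m`:
`w_m(P) = γ0^{|P|} · p^{−a·|P|} · ∏_{B∈P} Γ(|B|−a)/Γ(1−a) / D_m`. -/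
noncomputable def crsfW (γ0 a p : ℝ) (m : ℕ) {n : ℕ} (P : Finset (Finset (Fin n))) : ℝ :=
  γ0 ^ P.card * p ^ (-(a * (P.card : ℝ))) *
    (∏ B ∈ P, Real.Gamma ((B.card : ℝ) - a) / Real.Gamma (1 - a)) / Dsum γ0 a p m

/-- The restriction of a family of blocks to the first `i` elements of `Fin n`:
intersect each block with `{x | x < i}` and drop the empty pieces. -/
noncomputable def restrictFirst (n i : ℕ) (P : Finset (Finset (Fin n))) :
    Finset (Finset (Fin n)) :=
  (P.image fun B => B.filter fun x => (x : ℕ) < i).filter fun B => B.Nonempty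

/-- A set partition of the first `i` elements of `Fin n`. -/
def IsPartitionOn (n i : ℕ) (P : Finset (Finset (Fin n))) : Prop :=
  ∅ ∉ P ∧ (∀ B ∈ P, ∀ x ∈ B, (x : ℕ) < i) ∧
    ∀ x : Fin n, (x : ℕ) < i → ∃! B, B ∈ P ∧ x ∈ B

/-- The backward recursion `R_{n,γ0,a,p}(i,j)`: `R(n,j) = 1` and
`R(i,j) = (i − a·j)·R(i+1,j) + γ0·p^{−a}·R(i+1,j+1)` for `i < n`. -/
noncomputable def Rrec (γ0 a p : ℝ) (n : ℕ) : ℕ → ℕ → ℝ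
  | i, j =>
    if _ : n ≤ i then 1
    else ((i : ℝ) - a * (j : ℝ)) * Rrec γ0 a p n (i + 1) j
      + γ0 * p ^ (-a) * Rrec γ0 a p n (i + 1) (j + 1)
  termination_by i _ => n - i
  decreasing_by all_goals omega

namespace CRSF
variable {n : ℕ}

/-- cut a block down to the first `i` elements -/
noncomputable def fcut (i : ℕ) (B : Finset (Fin n)) : Finset (Fin n) :=
  B.filter fun x => (x : ℕ) < i

@[simp] lemma mem_fcut {i : ℕ} {B : Finset (Fin n)} {x : Fin n} :
    x ∈ fcut i B ↔ x ∈ B ∧ (x : ℕ) < i := Finset.mem_filter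

lemma restrictFirst_eq (i : ℕ) (P : Finset (Finset (Fin n))) :
    restrictFirst n i P = (P.image (fcut i)).filter (fun B => B.Nonempty) := rfl

lemma mem_restrictFirst {i : ℕ} {P : Finset (Finset (Fin n))} {C : Finset (Fin n)} :
    C ∈ restrictFirst n i P ↔ (∃ B ∈ P, C = fcut i B) ∧ C.Nonempty := by
  simp [restrictFirst_eq, eq_comm]

lemma blocks_nonempty {i : ℕ} {P : Finset (Finset (Fin n))} (h : IsPartitionOn n i P)
    {B : Finset (Fin n)} (hB : B ∈ P) : B.Nonempty := by
  rcases Finset.eq_empty_or_nonempty B with rfl | hne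
  · exact absurd hB h.1
  · exact hne

lemma fcut_fcut {i i' : ℕ} (hii : i ≤ i') (B : Finset (Fin n)) :
    fcut i (fcut i' B) = fcut i B := by
  simp only [fcut, Finset.filter_filter]
  apply Finset.filter_congr
  intro x _; constructor
  · rintro ⟨_, h⟩; exact h
  · intro h; exact ⟨by omega, h⟩

lemma fcut_of_bounded {i : ℕ} {B : Finset (Fin n)} (h : ∀ x ∈ B, (x : ℕ) < i) :
    fcut i B = B := by
  apply Finset.filter_true_of_mem h

lemma restrict_comp {i i' : ℕ} (hii : i ≤ i') (P : Finset (Finset (Fin n))) :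
    restrictFirst n i (restrictFirst n i' P) = restrictFirst n i P := by
  ext C
  simp only [mem_restrictFirst]
  constructor
  · rintro ⟨⟨D, ⟨⟨B, hB, rfl⟩, _⟩, rfl⟩, hne⟩
    exact ⟨⟨B, hB, fcut_fcut hii B⟩, hne⟩
  · rintro ⟨⟨B, hB, rfl⟩, hne⟩
    refine ⟨⟨fcut i' B, ⟨⟨B, hB, rfl⟩, ?_⟩, (fcut_fcut hii B).symm⟩, hne⟩
    obtain ⟨y, hy⟩ := hne
    rw [mem_fcut] at hy
    exact ⟨y, mem_fcut.2 ⟨hy.1, by omega⟩⟩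

lemma restrict_isPartitionOn {i i' : ℕ} (hii : i ≤ i') {P : Finset (Finset (Fin n))}
    (hP : IsPartitionOn n i' P) : IsPartitionOn n i (restrictFirst n i P) := by
  obtain ⟨h0, hbd, hex⟩ := hP
  refine ⟨?_, ?_, ?_⟩
  · intro h; exact absurd (mem_restrictFirst.1 h).2 (by simp)
  · intro C hC x hx
    obtain ⟨⟨B, hB, rfl⟩, _⟩ := mem_restrictFirst.1 hC
    exact (mem_fcut.1 hx).2
  · intro x hx
    obtain ⟨B, ⟨hB, hxB⟩, huniq⟩ := hex x (by omega)
    refine ⟨fcut i B, ⟨mem_restrictFirst.2 ⟨⟨B, hB, rfl⟩, ⟨x, mem_fcut.2 ⟨hxB, hx⟩⟩⟩,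
      mem_fcut.2 ⟨hxB, hx⟩⟩, ?_⟩
    rintro C ⟨hC, hxC⟩
    obtain ⟨⟨B', hB', rfl⟩, _⟩ := mem_restrictFirst.1 hC
    rw [huniq B' ⟨hB', (mem_fcut.1 hxC).1⟩]

lemma restrict_self {i : ℕ} {P : Finset (Finset (Fin n))} (hP : IsPartitionOn n i P) :
    restrictFirst n i P = P := by
  obtain ⟨h0, hbd, _⟩ := hP
  rw [restrictFirst_eq]
  have : P.image (fcut i) = P := by
    have h1 : P.image (fcut i) = P.image id :=
      Finset.image_congr (fun B hB => fcut_of_bounded (hbd B hB))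
    rw [h1, Finset.image_id]
  rw [this]
  apply Finset.filter_true_of_mem
  intro B hB
  rcases Finset.eq_empty_or_nonempty B with rfl | hne
  · exact absurd hB h0
  · exact hne

lemma isPartitionOn_top {P : Finset (Finset (Fin n))} :
    IsPartitionOn n n P ↔ IsPartition P := by
  constructor
  · rintro ⟨h0, _, hex⟩; exact ⟨h0, fun x => hex x x.isLt⟩
  · rintro ⟨h0, hex⟩
    exact ⟨h0, fun B _ x _ => x.isLt, fun x _ => hex x⟩

lemma sum_card_blocks {i : ℕ} (hin : i ≤ n) {τ : Finset (Finset (Fin n))}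
    (hτ : IsPartitionOn n i τ) : ∑ B ∈ τ, B.card = i := by
  obtain ⟨h0, hbd, hex⟩ := hτ
  have hdisj : ∀ B ∈ τ, ∀ C ∈ τ, B ≠ C → Disjoint B C := by
    intro B hB C hC hne
    rw [Finset.disjoint_left]
    intro x hxB hxC
    obtain ⟨D, _, huniq⟩ := hex x (hbd B hB x hxB)
    exact hne ((huniq B ⟨hB, hxB⟩).trans (huniq C ⟨hC, hxC⟩).symm)
  have hbu : τ.biUnion id = Finset.univ.filter (fun x : Fin n => (x : ℕ) < i) := by
    ext x
    simp only [Finset.mem_biUnion, id, Finset.mem_filter, Finset.mem_univ, true_and]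
    constructor
    · rintro ⟨B, hB, hxB⟩; exact hbd B hB x hxB
    · intro hx; obtain ⟨B, ⟨hB, hxB⟩, _⟩ := hex x hx; exact ⟨B, hB, hxB⟩
  have hcard : (Finset.univ.filter (fun x : Fin n => (x : ℕ) < i)).card = i := by
    rcases eq_or_lt_of_le hin with rfl | hlt
    · rw [Finset.filter_true_of_mem (fun x _ => x.isLt)]; simp
    · have he : (Finset.univ.filter (fun x : Fin n => (x : ℕ) < i)) = Finset.Iio ⟨i, hlt⟩ := by
        ext x; simp [Fin.lt_def]
      rw [he, Fin.card_Iio]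
  calc ∑ B ∈ τ, B.card = (τ.biUnion id).card := (Finset.card_biUnion hdisj).symm
    _ = i := by rw [hbu, hcard]

section Ext
variable {i : ℕ} {τ : Finset (Finset (Fin n))} {x : Fin n}

lemma not_mem_block (hτ : IsPartitionOn n i τ) (hx : (x : ℕ) = i)
    {B : Finset (Fin n)} (hB : B ∈ τ) : x ∉ B := by
  intro h
  have := hτ.2.1 B hB x h
  omega

lemma eq_x_of_val {y : Fin n} (hx : (x : ℕ) = i) (hy : (y : ℕ) = i) : y = x :=
  Fin.ext (by omega)

lemma extNew_partOn (hτ : IsPartitionOn n i τ) (hx : (x : ℕ) = i) :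
    IsPartitionOn n (i + 1) (insert {x} τ) := by
  obtain ⟨h0, hbd, hex⟩ := hτ
  refine ⟨?_, ?_, ?_⟩
  · intro h
    rcases Finset.mem_insert.1 h with h | h
    · exact absurd h.symm (Finset.singleton_ne_empty x)
    · exact h0 h
  · intro B hB y hy
    rcases Finset.mem_insert.1 hB with rfl | hB
    · rw [Finset.mem_singleton] at hy; omega
    · have := hbd B hB y hy; omega
  · intro y hy
    rcases Nat.lt_or_ge (y : ℕ) i with hyi | hyi
    · obtain ⟨B, ⟨hB, hyB⟩, huniq⟩ := hex y hyi
      refine ⟨B, ⟨Finset.mem_insert_of_mem hB, hyB⟩, ?_⟩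
      rintro C ⟨hC, hyC⟩
      rcases Finset.mem_insert.1 hC with rfl | hC
      · rw [Finset.mem_singleton] at hyC; subst hyC; omega
      · exact huniq C ⟨hC, hyC⟩
    · have hyx : y = x := eq_x_of_val hx (by omega)
      subst hyx
      refine ⟨{y}, ⟨Finset.mem_insert_self _ _, Finset.mem_singleton_self y⟩, ?_⟩
      rintro C ⟨hC, hyC⟩
      rcases Finset.mem_insert.1 hC with rfl | hC
      · rfl
      · exact absurd (hbd C hC y hyC) (by omega)

lemma extNew_restrict (hτ : IsPartitionOn n i τ) (hx : (x : ℕ) = i) :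
    restrictFirst n i (insert {x} τ) = τ := by
  have hbd := hτ.2.1
  ext C
  rw [mem_restrictFirst]
  constructor
  · rintro ⟨⟨B, hB, rfl⟩, hne⟩
    rcases Finset.mem_insert.1 hB with rfl | hB
    · exfalso
      obtain ⟨y, hy⟩ := hne
      rw [mem_fcut, Finset.mem_singleton] at hy
      obtain ⟨rfl, h⟩ := hy; omega
    · rwa [fcut_of_bounded (hbd B hB)]
  · intro hC
    exact ⟨⟨C, Finset.mem_insert_of_mem hC, (fcut_of_bounded (hbd C hC)).symm⟩,
      blocks_nonempty hτ hC⟩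

lemma extOld_partOn (hτ : IsPartitionOn n i τ) (hx : (x : ℕ) = i)
    {B₀ : Finset (Fin n)} (hB₀ : B₀ ∈ τ) :
    IsPartitionOn n (i + 1) (insert (insert x B₀) (τ.erase B₀)) := by
  obtain ⟨h0, hbd, hex⟩ := hτ
  have hxB₀ : x ∉ B₀ := not_mem_block ⟨h0, hbd, hex⟩ hx hB₀
  refine ⟨?_, ?_, ?_⟩
  · intro h
    rcases Finset.mem_insert.1 h with h | h
    · exact absurd h.symm (Finset.insert_ne_empty x B₀)
    · exact h0 (Finset.mem_of_mem_erase h)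
  · intro B hB y hy
    rcases Finset.mem_insert.1 hB with rfl | hB
    · rcases Finset.mem_insert.1 hy with rfl | hy
      · omega
      · have := hbd B₀ hB₀ y hy; omega
    · have := hbd B (Finset.mem_of_mem_erase hB) y hy; omega
  · intro y hy
    rcases Nat.lt_or_ge (y : ℕ) i with hyi | hyi
    · obtain ⟨B, ⟨hB, hyB⟩, huniq⟩ := hex y hyi
      rcases eq_or_ne B B₀ with rfl | hBB
      · refine ⟨insert x B, ⟨Finset.mem_insert_self _ _, Finset.mem_insert_of_mem hyB⟩, ?_⟩
        rintro C ⟨hC, hyC⟩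
        rcases Finset.mem_insert.1 hC with rfl | hC
        · rfl
        · exact absurd (huniq C ⟨Finset.mem_of_mem_erase hC, hyC⟩)
            (Finset.ne_of_mem_erase hC)
      · refine ⟨B, ⟨Finset.mem_insert_of_mem (Finset.mem_erase.2 ⟨hBB, hB⟩), hyB⟩, ?_⟩
        rintro C ⟨hC, hyC⟩
        rcases Finset.mem_insert.1 hC with rfl | hC
        · exfalso
          rcases Finset.mem_insert.1 hyC with rfl | hyC
          · omega
          · exact hBB (huniq B₀ ⟨hB₀, hyC⟩).symm
        · exact huniq C ⟨Finset.mem_of_mem_erase hC, hyC⟩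
    · have hyx : y = x := eq_x_of_val hx (by omega)
      subst hyx
      refine ⟨insert y B₀, ⟨Finset.mem_insert_self _ _, Finset.mem_insert_self _ _⟩, ?_⟩
      rintro C ⟨hC, hyC⟩
      rcases Finset.mem_insert.1 hC with rfl | hC
      · rfl
      · exact absurd (hbd C (Finset.mem_of_mem_erase hC) y hyC) (by omega)

lemma fcut_insert_x (hx : (x : ℕ) = i) {B₀ : Finset (Fin n)}
    (hbd : ∀ y ∈ B₀, (y : ℕ) < i) : fcut i (insert x B₀) = B₀ := by
  ext y
  rw [mem_fcut, Finset.mem_insert]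
  constructor
  · rintro ⟨rfl | hy, hlt⟩
    · omega
    · exact hy
  · intro hy; exact ⟨Or.inr hy, hbd y hy⟩

lemma extOld_restrict (hτ : IsPartitionOn n i τ) (hx : (x : ℕ) = i)
    {B₀ : Finset (Fin n)} (hB₀ : B₀ ∈ τ) :
    restrictFirst n i (insert (insert x B₀) (τ.erase B₀)) = τ := by
  have hbd := hτ.2.1
  rw [restrictFirst_eq, Finset.image_insert]
  rw [fcut_insert_x hx (hbd B₀ hB₀)]
  have himg : (τ.erase B₀).image (fcut i) = τ.erase B₀ := by
    have h1 : (τ.erase B₀).image (fcut i) = (τ.erase B₀).image id :=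
      Finset.image_congr (fun B hB => fcut_of_bounded (hbd B (Finset.mem_of_mem_erase hB)))
    rw [h1, Finset.image_id]
  rw [himg, Finset.insert_erase hB₀]
  exact Finset.filter_true_of_mem (fun B hB => blocks_nonempty hτ hB)

end Ext

section Ext2
variable {i : ℕ} {τ : Finset (Finset (Fin n))} {x : Fin n}

lemma ext_surj (hx : (x : ℕ) = i) {τ' : Finset (Finset (Fin n))}
    (hτ' : IsPartitionOn n (i + 1) τ') (hr : restrictFirst n i τ' = τ) :
    τ' = insert {x} τ ∨ ∃ B₀ ∈ τ, τ' = insert (insert x B₀) (τ.erase B₀) := by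
  obtain ⟨h0, hbd, hex⟩ := hτ'
  obtain ⟨C, ⟨hC, hxC⟩, huniq⟩ := hex x (by omega)
  -- every element of a block other than C is < i
  have herase : ∀ D ∈ τ'.erase C, ∀ y ∈ D, (y : ℕ) < i := by
    intro D hD y hy
    have hD' := Finset.mem_of_mem_erase hD
    have hy1 : (y : ℕ) < i + 1 := hbd D hD' y hy
    rcases Nat.lt_or_ge (y : ℕ) i with h | h
    · exact h
    · exfalso
      have : y = x := eq_x_of_val hx (by omega)
      subst this
      exact Finset.ne_of_mem_erase hD (huniq D ⟨hD', hy⟩)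
  have hCmem : ∀ y ∈ C, y = x ∨ (y : ℕ) < i := by
    intro y hy
    have hy1 : (y : ℕ) < i + 1 := hbd C hC y hy
    rcases Nat.lt_or_ge (y : ℕ) i with h | h
    · exact Or.inr h
    · exact Or.inl (eq_x_of_val hx (by omega))
  have hins : τ' = insert C (τ'.erase C) := (Finset.insert_erase hC).symm
  have himg : restrictFirst n i τ' =
      Finset.filter (fun B => B.Nonempty) (insert (fcut i C) (τ'.erase C)) := by
    rw [restrictFirst_eq]
    conv_lhs => rw [hins]
    rw [Finset.image_insert]
    congr 1
    have h1 : (τ'.erase C).image (fcut i) = (τ'.erase C).image id :=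
      Finset.image_congr (fun D hD => fcut_of_bounded (herase D hD))
    rw [h1, Finset.image_id]
  have herasene : ∀ D ∈ τ'.erase C, D.Nonempty := by
    intro D hD
    rcases Finset.eq_empty_or_nonempty D with rfl | h
    · exact absurd (Finset.mem_of_mem_erase hD) h0
    · exact h
  rcases Finset.eq_empty_or_nonempty (fcut i C) with hBe | hBne
  · -- C = {x}
    left
    have hCx : C = {x} := by
      apply Finset.Subset.antisymm
      · intro y hy
        rcases hCmem y hy with rfl | h
        · exact Finset.mem_singleton_self y
        · exfalso
          have : y ∈ fcut i C := mem_fcut.2 ⟨hy, h⟩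
          rw [hBe] at this; exact absurd this (Finset.notMem_empty y)
      · intro y hy
        rw [Finset.mem_singleton] at hy; subst hy; exact hxC
    have hτeq : τ = τ'.erase C := by
      rw [← hr, himg, hBe]
      rw [Finset.filter_insert]
      simp only [Finset.not_nonempty_empty, if_false]
      exact Finset.filter_true_of_mem herasene
    rw [hτeq, ← hCx, ← hins]
  · -- C = insert x B₀ with B₀ = fcut i C
    right
    set B₀ := fcut i C with hB₀def
    have hxB₀ : x ∉ B₀ := by
      intro h; rw [hB₀def, mem_fcut] at h; omega
    have hCeq : C = insert x B₀ := by
      apply Finset.Subset.antisymm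
      · intro y hy
        rcases hCmem y hy with rfl | h
        · exact Finset.mem_insert_self _ _
        · exact Finset.mem_insert_of_mem (mem_fcut.2 ⟨hy, h⟩)
      · intro y hy
        rcases Finset.mem_insert.1 hy with rfl | hy
        · exact hxC
        · exact (mem_fcut.1 hy).1
    have hτeq : τ = insert B₀ (τ'.erase C) := by
      rw [← hr, himg, Finset.filter_insert, if_pos hBne]
      congr 1
      exact Finset.filter_true_of_mem herasene
    have hB₀mem : B₀ ∈ τ := by rw [hτeq]; exact Finset.mem_insert_self _ _
    have hB₀notin : B₀ ∉ τ'.erase C := by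
      intro h
      obtain ⟨y, hy⟩ := hBne
      have hyC : y ∈ C := (mem_fcut.1 hy).1
      have hyi : (y : ℕ) < i := (mem_fcut.1 hy).2
      obtain ⟨D, _, huniqy⟩ := hex y (by omega)
      have h1 : B₀ = D := huniqy B₀ ⟨Finset.mem_of_mem_erase h, hy⟩
      have h2 : C = D := huniqy C ⟨hC, hyC⟩
      exact Finset.ne_of_mem_erase h (h1.trans h2.symm)
    refine ⟨B₀, hB₀mem, ?_⟩
    have : τ.erase B₀ = τ'.erase C := by
      rw [hτeq, Finset.erase_insert hB₀notin]
    rw [this, ← hCeq, ← hins]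

lemma extNew_ne_extOld (hτ : IsPartitionOn n i τ) (hx : (x : ℕ) = i)
    {B₀ : Finset (Fin n)} (hB₀ : B₀ ∈ τ) :
    insert {x} τ ≠ insert (insert x B₀) (τ.erase B₀) := by
  intro h
  have hxs : ({x} : Finset (Fin n)) ∈ insert (insert x B₀) (τ.erase B₀) := by
    rw [← h]; exact Finset.mem_insert_self _ _
  rcases Finset.mem_insert.1 hxs with h1 | h1
  · obtain ⟨y, hy⟩ := blocks_nonempty hτ hB₀
    have : y ∈ ({x} : Finset (Fin n)) := by rw [h1]; exact Finset.mem_insert_of_mem hy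
    rw [Finset.mem_singleton] at this; subst this
    exact not_mem_block hτ hx hB₀ hy
  · exact not_mem_block hτ hx (Finset.mem_of_mem_erase h1) (Finset.mem_singleton_self x)

lemma extOld_inj (hτ : IsPartitionOn n i τ) (hx : (x : ℕ) = i)
    {B₀ B₁ : Finset (Fin n)} (hB₀ : B₀ ∈ τ) (hB₁ : B₁ ∈ τ)
    (h : insert (insert x B₀) (τ.erase B₀) = insert (insert x B₁) (τ.erase B₁)) :
    B₀ = B₁ := by
  have hm : insert x B₀ ∈ insert (insert x B₁) (τ.erase B₁) := by
    rw [← h]; exact Finset.mem_insert_self _ _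
  rcases Finset.mem_insert.1 hm with h1 | h1
  · have h2 : x ∉ B₀ := not_mem_block hτ hx hB₀
    have h3 : x ∉ B₁ := not_mem_block hτ hx hB₁
    have := congrArg (fun s => Finset.erase s x) h1
    simpa [Finset.erase_insert h2, Finset.erase_insert h3] using this
  · exact absurd (Finset.mem_insert_self x B₀)
      (not_mem_block hτ hx (Finset.mem_of_mem_erase h1))

lemma ext_finset_eq (hτ : IsPartitionOn n i τ) (hx : (x : ℕ) = i) :
    (Finset.univ.filter (IsPartitionOn n (i + 1))).filter
        (fun τ' => restrictFirst n i τ' = τ)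
      = insert (insert {x} τ)
          (τ.image (fun B => insert (insert x B) (τ.erase B))) := by
  ext τ'
  simp only [Finset.mem_filter, Finset.mem_univ, true_and, Finset.mem_insert,
    Finset.mem_image]
  constructor
  · rintro ⟨h1, h2⟩
    rcases ext_surj hx h1 h2 with h | ⟨B₀, hB₀, h⟩
    · exact Or.inl h
    · exact Or.inr ⟨B₀, hB₀, h.symm⟩
  · rintro (rfl | ⟨B₀, hB₀, rfl⟩)
    · exact ⟨extNew_partOn hτ hx, extNew_restrict hτ hx⟩
    · exact ⟨extOld_partOn hτ hx hB₀, extOld_restrict hτ hx hB₀⟩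

lemma sum_ext (hτ : IsPartitionOn n i τ) (hx : (x : ℕ) = i)
    (φ : Finset (Finset (Fin n)) → ℝ) :
    ∑ τ' ∈ (Finset.univ.filter (IsPartitionOn n (i + 1))).filter
        (fun τ' => restrictFirst n i τ' = τ), φ τ'
      = φ (insert {x} τ) + ∑ B ∈ τ, φ (insert (insert x B) (τ.erase B)) := by
  rw [ext_finset_eq hτ hx, Finset.sum_insert, Finset.sum_image]
  · intro B₀ hB₀ B₁ hB₁ h
    exact extOld_inj hτ hx hB₀ hB₁ h
  · rw [Finset.mem_image]
    rintro ⟨B₀, hB₀, h⟩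
    exact extNew_ne_extOld hτ hx hB₀ h.symm

end Ext2

section Weights
variable {a : ℝ}

noncomputable def gblk (a : ℝ) (m : ℕ) : ℝ := Real.Gamma ((m : ℝ) - a) / Real.Gamma (1 - a)

lemma Gamma_one_sub_ne_zero (ha : a < 1) : Real.Gamma (1 - a) ≠ 0 :=
  (Real.Gamma_pos_of_pos (by linarith)).ne'

lemma gblk_one (ha : a < 1) : gblk a 1 = 1 := by
  rw [gblk]
  norm_num
  exact Gamma_one_sub_ne_zero ha

lemma gblk_succ (ha : a < 1) {m : ℕ} (hm : 1 ≤ m) :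
    gblk a (m + 1) = ((m : ℝ) - a) * gblk a m := by
  have h1 : ((m + 1 : ℕ) : ℝ) - a = ((m : ℝ) - a) + 1 := by push_cast; ring
  have h2 : (m : ℝ) - a ≠ 0 := by
    have : (1 : ℝ) ≤ (m : ℝ) := by exact_mod_cast hm
    nlinarith
  rw [gblk, h1, Real.Gamma_add_one h2, gblk, mul_div_assoc]

/-- the summand in the generalized Stirling numbers -/
noncomputable def hfun (a : ℝ) (m : ℕ) : ℝ :=
  Real.Gamma ((m : ℝ) - a) / ((m.factorial : ℝ) * Real.Gamma (1 - a))

lemma hfun_one (ha : a < 1) : hfun a 1 = 1 := by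
  rw [hfun]
  norm_num
  exact Gamma_one_sub_ne_zero ha

lemma hfun_succ_mul (ha : a < 1) {m : ℕ} (hm : 1 ≤ m) :
    ((m : ℝ) + 1) * hfun a (m + 1) = ((m : ℝ) - a) * hfun a m := by
  have h1 : ((m + 1 : ℕ) : ℝ) - a = ((m : ℝ) - a) + 1 := by push_cast; ring
  have h2 : (m : ℝ) - a ≠ 0 := by
    have : (1 : ℝ) ≤ (m : ℝ) := by exact_mod_cast hm
    nlinarith
  rw [hfun, hfun, h1, Real.Gamma_add_one h2, Nat.factorial_succ]
  have hfac : ((m.factorial : ℝ)) ≠ 0 := by exact_mod_cast m.factorial_ne_zero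
  have hG := Gamma_one_sub_ne_zero ha
  push_cast
  field_simp

end Weights

section Tsum
variable {a : ℝ}

noncomputable def Aset (l m : ℕ) : Finset (Fin l → ℕ) :=
  (Finset.Nat.antidiagonalTuple l m).filter (fun f => ∀ k, 0 < f k)

lemma mem_Aset {l m : ℕ} {f : Fin l → ℕ} :
    f ∈ Aset l m ↔ (∑ k, f k = m) ∧ ∀ k, 0 < f k := by
  simp [Aset, Finset.Nat.mem_antidiagonalTuple]

noncomputable def Tsum (a : ℝ) (l m : ℕ) : ℝ := ∑ f ∈ Aset l m, ∏ k, hfun a (f k)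

lemma sum_part_one (ha : a < 1) (i j : ℕ) (k : Fin (j + 1)) :
    ∑ f ∈ (Aset (j + 1) (i + 1)).filter (fun f => f k = 1),
        ((f k : ℝ)) * ∏ l, hfun a (f l)
      = Tsum a j i := by
  rw [Tsum]
  refine Finset.sum_bij' (fun f _ => fun m => f (k.succAbove m))
    (fun g _ => k.insertNth 1 g) ?_ ?_ ?_ ?_ ?_
  · intro f hf
    rw [Finset.mem_filter] at hf
    obtain ⟨hf, hfk⟩ := hf
    rw [mem_Aset] at hf ⊢
    obtain ⟨hsum, hpos⟩ := hf
    constructor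
    · have := Fin.sum_univ_succAbove f k
      omega
    · intro m; exact hpos _
  · intro g hg
    rw [mem_Aset] at hg
    obtain ⟨hsum, hpos⟩ := hg
    rw [Finset.mem_filter, mem_Aset]
    refine ⟨⟨?_, ?_⟩, ?_⟩
    · have h1 := Fin.sum_univ_succAbove (k.insertNth 1 g) k
      simp only [Fin.insertNth_apply_same, Fin.insertNth_apply_succAbove] at h1
      omega
    · intro l
      rcases eq_or_ne l k with rfl | hlk
      · simp [Fin.insertNth_apply_same]
      · obtain ⟨m, rfl⟩ := Fin.exists_succAbove_eq hlk
        simp only [Fin.insertNth_apply_succAbove]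
        exact hpos m
    · simp [Fin.insertNth_apply_same]
  · intro f hf
    rw [Finset.mem_filter] at hf
    funext l
    rcases eq_or_ne l k with rfl | hlk
    · simp [Fin.insertNth_apply_same, hf.2]
    · obtain ⟨m, rfl⟩ := Fin.exists_succAbove_eq hlk
      simp [Fin.insertNth_apply_succAbove]
  · intro g hg
    funext m
    simp [Fin.insertNth_apply_succAbove]
  · intro f hf
    dsimp only
    rw [Finset.mem_filter] at hf
    rw [Fin.prod_univ_succAbove (fun l => hfun a (f l)) k, hf.2, hfun_one ha]
    push_cast [hf.2]
    ring

lemma sum_part_two (ha : a < 1) (i : ℕ) {l : ℕ} (k : Fin l) :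
    ∑ f ∈ (Aset l (i + 1)).filter (fun f => ¬ f k = 1),
        ((f k : ℝ)) * ∏ m, hfun a (f m)
      = ∑ g ∈ Aset l i, ((g k : ℝ) - a) * ∏ m, hfun a (g m) := by
  refine Finset.sum_bij' (fun f _ => Function.update f k (f k - 1))
    (fun g _ => Function.update g k (g k + 1)) ?_ ?_ ?_ ?_ ?_
  · intro f hf
    rw [Finset.mem_filter] at hf
    obtain ⟨hf, hfk⟩ := hf
    rw [mem_Aset] at hf ⊢
    obtain ⟨hsum, hpos⟩ := hf
    have hfk2 : 2 ≤ f k := by have := hpos k; omega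
    constructor
    · rw [Finset.sum_update_of_mem (Finset.mem_univ k), ← Finset.erase_eq]
      have h2 := Finset.add_sum_erase Finset.univ f (Finset.mem_univ k)
      omega
    · intro m
      rcases eq_or_ne m k with rfl | hmk
      · rw [Function.update_self]; omega
      · rw [Function.update_of_ne hmk]; exact hpos m
  · intro g hg
    rw [mem_Aset] at hg
    obtain ⟨hsum, hpos⟩ := hg
    rw [Finset.mem_filter, mem_Aset]
    refine ⟨⟨?_, ?_⟩, ?_⟩
    · rw [Finset.sum_update_of_mem (Finset.mem_univ k), ← Finset.erase_eq]
      have h2 := Finset.add_sum_erase Finset.univ g (Finset.mem_univ k)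
      omega
    · intro m
      rcases eq_or_ne m k with rfl | hmk
      · rw [Function.update_self]; omega
      · rw [Function.update_of_ne hmk]; exact hpos m
    · rw [Function.update_self]
      have := hpos k; omega
  · intro f hf
    rw [Finset.mem_filter, mem_Aset] at hf
    have hfk1 : 1 ≤ f k := hf.1.2 k
    funext m
    rcases eq_or_ne m k with rfl | hmk
    · simp only [Function.update_self]
      omega
    · rw [Function.update_of_ne hmk, Function.update_of_ne hmk]
  · intro g hg
    funext m
    rcases eq_or_ne m k with rfl | hmk
    · simp only [Function.update_self]
      omega
    · rw [Function.update_of_ne hmk, Function.update_of_ne hmk]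
  · intro f hf
    rw [Finset.mem_filter, mem_Aset] at hf
    obtain ⟨⟨hsum, hpos⟩, hfk⟩ := hf
    have hfk2 : 2 ≤ f k := by have := hpos k; omega
    have hup : ∀ m ∈ Finset.univ.erase k,
        hfun a (Function.update f k (f k - 1) m) = hfun a (f m) := by
      intro m hm
      rw [Function.update_of_ne (Finset.mem_erase.1 hm).1]
    rw [← Finset.mul_prod_erase Finset.univ (fun m => hfun a (f m)) (Finset.mem_univ k),
      ← Finset.mul_prod_erase Finset.univ
        (fun m => hfun a (Function.update f k (f k - 1) m)) (Finset.mem_univ k),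
      Finset.prod_congr rfl hup, Function.update_self]
    have hstep : ((f k : ℝ)) * hfun a (f k) = (((f k - 1 : ℕ) : ℝ) - a) * hfun a (f k - 1) := by
      have h1 : f k = (f k - 1) + 1 := by omega
      have h2 : 1 ≤ f k - 1 := by omega
      have h3 := hfun_succ_mul ha h2
      rw [← h1] at h3
      rw [Nat.cast_sub (by omega : 1 ≤ f k)] at h3 ⊢
      linear_combination h3
    linear_combination (∏ x ∈ Finset.univ.erase k, hfun a (f x)) * hstep

end Tsum

section Trec
variable {a : ℝ}

lemma Tsum_succ (ha : a < 1) (i j : ℕ) :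
    ((i : ℝ) + 1) * Tsum a (j + 1) (i + 1)
      = ((i : ℝ) - a * ((j : ℝ) + 1)) * Tsum a (j + 1) i + ((j : ℝ) + 1) * Tsum a j i := by
  have key : ((i : ℝ) + 1) * Tsum a (j + 1) (i + 1)
      = ∑ k : Fin (j + 1), ∑ f ∈ Aset (j + 1) (i + 1), (f k : ℝ) * ∏ l, hfun a (f l) := by
    rw [Tsum, Finset.mul_sum, Finset.sum_comm]
    apply Finset.sum_congr rfl
    intro f hf
    have h1 : ∑ k, f k = i + 1 := (mem_Aset.1 hf).1
    have h2 : (∑ k, ((f k : ℝ))) = (i : ℝ) + 1 := by exact_mod_cast congrArg (Nat.cast : ℕ → ℝ) h1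
    rw [← Finset.sum_mul, h2]
  rw [key]
  have hker : ∀ k : Fin (j + 1),
      ∑ f ∈ Aset (j + 1) (i + 1), (f k : ℝ) * ∏ l, hfun a (f l)
        = Tsum a j i + ∑ g ∈ Aset (j + 1) i, ((g k : ℝ) - a) * ∏ m, hfun a (g m) := by
    intro k
    rw [← Finset.sum_filter_add_sum_filter_not (Aset (j + 1) (i + 1)) (fun f => f k = 1),
      sum_part_one ha i j k, sum_part_two ha i k]
  rw [Finset.sum_congr rfl (fun k _ => hker k), Finset.sum_add_distrib, Finset.sum_const,
    Finset.card_univ, Fintype.card_fin, Finset.sum_comm]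
  have hlast : ∀ g ∈ Aset (j + 1) i,
      ∑ k : Fin (j + 1), ((g k : ℝ) - a) * ∏ m, hfun a (g m)
        = ((i : ℝ) - a * ((j : ℝ) + 1)) * ∏ m, hfun a (g m) := by
    intro g hg
    rw [← Finset.sum_mul]
    congr 1
    have h1 : ∑ k, g k = i := (mem_Aset.1 hg).1
    have h2 : (∑ k, ((g k : ℝ))) = (i : ℝ) := by exact_mod_cast congrArg (Nat.cast : ℕ → ℝ) h1
    rw [Finset.sum_sub_distrib, h2, Finset.sum_const, Finset.card_univ, Fintype.card_fin]
    push_cast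
    ring
  rw [Finset.sum_congr rfl hlast, ← Finset.mul_sum, ← Tsum]
  push_cast
  ring

lemma genStirling_eq_Tsum (a : ℝ) (m l : ℕ) :
    genStirling a m l = (m.factorial : ℝ) / (l.factorial : ℝ) * Tsum a l m := rfl

lemma genStirling_succ (ha : a < 1) (i j : ℕ) :
    genStirling a (i + 1) (j + 1)
      = ((i : ℝ) - a * ((j : ℝ) + 1)) * genStirling a i (j + 1) + genStirling a i j := by
  have h := Tsum_succ ha i j
  rw [genStirling_eq_Tsum, genStirling_eq_Tsum, genStirling_eq_Tsum]
  have hfi : (((i + 1).factorial : ℕ) : ℝ) = ((i : ℝ) + 1) * (i.factorial : ℝ) := by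
    rw [Nat.factorial_succ]; push_cast; ring
  have hfj : (((j + 1).factorial : ℕ) : ℝ) = ((j : ℝ) + 1) * (j.factorial : ℝ) := by
    rw [Nat.factorial_succ]; push_cast; ring
  have hj0 : (j.factorial : ℝ) ≠ 0 := by exact_mod_cast j.factorial_ne_zero
  have hi0 : (i.factorial : ℝ) ≠ 0 := by exact_mod_cast i.factorial_ne_zero
  have hj10 : ((j : ℝ) + 1) ≠ 0 := by positivity
  rw [hfi, hfj]
  have hexp : (i.factorial : ℝ) / (((j : ℝ) + 1) * (j.factorial : ℝ)) * ((j : ℝ) + 1)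
      = (i.factorial : ℝ) / (j.factorial : ℝ) := by
    field_simp
  calc ((i : ℝ) + 1) * (i.factorial : ℝ) / (((j : ℝ) + 1) * (j.factorial : ℝ))
        * Tsum a (j + 1) (i + 1)
      = (i.factorial : ℝ) / (((j : ℝ) + 1) * (j.factorial : ℝ))
        * (((i : ℝ) + 1) * Tsum a (j + 1) (i + 1)) := by ring
    _ = (i.factorial : ℝ) / (((j : ℝ) + 1) * (j.factorial : ℝ))
        * (((i : ℝ) - a * ((j : ℝ) + 1)) * Tsum a (j + 1) i + ((j : ℝ) + 1) * Tsum a j i) := by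
        rw [h]
    _ = ((i : ℝ) - a * ((j : ℝ) + 1))
          * ((i.factorial : ℝ) / (((j : ℝ) + 1) * (j.factorial : ℝ)) * Tsum a (j + 1) i)
        + ((i.factorial : ℝ) / (((j : ℝ) + 1) * (j.factorial : ℝ)) * ((j : ℝ) + 1))
          * Tsum a j i := by ring
    _ = ((i : ℝ) - a * ((j : ℝ) + 1))
          * ((i.factorial : ℝ) / (((j : ℝ) + 1) * (j.factorial : ℝ)) * Tsum a (j + 1) i)
        + (i.factorial : ℝ) / (j.factorial : ℝ) * Tsum a j i := by rw [hexp]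

end Trec

section WsumSec
variable {a : ℝ}

lemma Tsum_zero_zero : Tsum a 0 0 = 1 := by
  have hA : Aset 0 0 = {![]} := by
    ext f
    rw [mem_Aset]
    simp only [Finset.mem_singleton]
    constructor
    · intro _; funext k; exact k.elim0
    · rintro rfl; exact ⟨by simp, fun k => k.elim0⟩
  rw [Tsum, hA, Finset.sum_singleton]
  simp

lemma Tsum_succ_zero (j : ℕ) : Tsum a (j + 1) 0 = 0 := by
  have hA : Aset (j + 1) 0 = ∅ := by
    apply Finset.eq_empty_of_forall_notMem
    intro f hf
    rw [mem_Aset] at hf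
    obtain ⟨hsum, hpos⟩ := hf
    have h1 := Finset.single_le_sum (f := f) (fun k _ => Nat.zero_le _) (Finset.mem_univ 0)
    have := hpos 0
    omega
  rw [Tsum, hA, Finset.sum_empty]

lemma Tsum_zero_succ (i : ℕ) : Tsum a 0 (i + 1) = 0 := by
  have hA : Aset 0 (i + 1) = ∅ := by
    apply Finset.eq_empty_of_forall_notMem
    intro f hf
    rw [mem_Aset] at hf
    simpa using hf.1
  rw [Tsum, hA, Finset.sum_empty]

lemma genStirling_zero_zero : genStirling a 0 0 = 1 := by
  rw [genStirling_eq_Tsum, Tsum_zero_zero]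
  simp [Nat.factorial]

lemma genStirling_zero_succ (j : ℕ) : genStirling a 0 (j + 1) = 0 := by
  rw [genStirling_eq_Tsum, Tsum_succ_zero]
  simp

lemma genStirling_succ_zero (i : ℕ) : genStirling a (i + 1) 0 = 0 := by
  rw [genStirling_eq_Tsum, Tsum_zero_succ]
  simp

noncomputable def partsOn (n i : ℕ) : Finset (Finset (Finset (Fin n))) :=
  Finset.univ.filter (IsPartitionOn n i)

lemma mem_partsOn {i : ℕ} {τ : Finset (Finset (Fin n))} :
    τ ∈ partsOn n i ↔ IsPartitionOn n i τ := by simp [partsOn]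

noncomputable def Wsum (a : ℝ) (n i j : ℕ) : ℝ :=
  ∑ τ ∈ (partsOn n i).filter (fun τ => τ.card = j), ∏ B ∈ τ, gblk a B.card

section ExtCards
variable {i : ℕ} {τ : Finset (Finset (Fin n))} {x : Fin n}

lemma singleton_not_mem (hτ : IsPartitionOn n i τ) (hx : (x : ℕ) = i) :
    ({x} : Finset (Fin n)) ∉ τ :=
  fun h => not_mem_block hτ hx h (Finset.mem_singleton_self x)

lemma insert_not_mem_erase (hτ : IsPartitionOn n i τ) (hx : (x : ℕ) = i)
    {B₀ : Finset (Fin n)} : insert x B₀ ∉ τ.erase B₀ :=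
  fun h => not_mem_block hτ hx (Finset.mem_of_mem_erase h) (Finset.mem_insert_self x B₀)

lemma card_extNew (hτ : IsPartitionOn n i τ) (hx : (x : ℕ) = i) :
    (insert ({x} : Finset (Fin n)) τ).card = τ.card + 1 :=
  Finset.card_insert_of_notMem (singleton_not_mem hτ hx)

lemma card_extOld (hτ : IsPartitionOn n i τ) (hx : (x : ℕ) = i)
    {B₀ : Finset (Fin n)} (hB₀ : B₀ ∈ τ) :
    (insert (insert x B₀) (τ.erase B₀)).card = τ.card := by
  rw [Finset.card_insert_of_notMem (insert_not_mem_erase hτ hx),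
    Finset.card_erase_of_mem hB₀]
  have : 1 ≤ τ.card := Finset.card_pos.2 ⟨B₀, hB₀⟩
  omega

lemma prod_extNew (ha : a < 1) (hτ : IsPartitionOn n i τ) (hx : (x : ℕ) = i) :
    ∏ B ∈ insert ({x} : Finset (Fin n)) τ, gblk a B.card = ∏ B ∈ τ, gblk a B.card := by
  rw [Finset.prod_insert (singleton_not_mem hτ hx), Finset.card_singleton, gblk_one ha,
    one_mul]

lemma prod_extOld (ha : a < 1) (hτ : IsPartitionOn n i τ) (hx : (x : ℕ) = i)
    {B₀ : Finset (Fin n)} (hB₀ : B₀ ∈ τ) :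
    ∏ B ∈ insert (insert x B₀) (τ.erase B₀), gblk a B.card
      = ((B₀.card : ℝ) - a) * ∏ B ∈ τ, gblk a B.card := by
  rw [Finset.prod_insert (insert_not_mem_erase hτ hx),
    Finset.card_insert_of_notMem (not_mem_block hτ hx hB₀),
    gblk_succ ha (Finset.card_pos.2 (blocks_nonempty hτ hB₀)),
    ← Finset.mul_prod_erase τ (fun B => gblk a B.card) hB₀]
  ring

end ExtCards

lemma sum_ext' {i : ℕ} {τ : Finset (Finset (Fin n))} {x : Fin n}
    (hτ : IsPartitionOn n i τ) (hx : (x : ℕ) = i) (φ : Finset (Finset (Fin n)) → ℝ) :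
    ∑ τ' ∈ (partsOn n (i + 1)).filter (fun τ' => restrictFirst n i τ' = τ), φ τ'
      = φ (insert {x} τ) + ∑ B ∈ τ, φ (insert (insert x B) (τ.erase B)) :=
  sum_ext hτ hx φ

lemma Wsum_succ (ha : a < 1) {i : ℕ} (hi : i < n) (j : ℕ) :
    Wsum a n (i + 1) (j + 1)
      = ((i : ℝ) - a * ((j : ℝ) + 1)) * Wsum a n i (j + 1) + Wsum a n i j := by
  classical
  set x : Fin n := ⟨i, hi⟩ with hxdef
  have hx : (x : ℕ) = i := rfl
  set φ : Finset (Finset (Fin n)) → ℝ :=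
    fun τ' => if τ'.card = j + 1 then ∏ B ∈ τ', gblk a B.card else 0 with hφ
  have h1 : Wsum a n (i + 1) (j + 1) = ∑ τ' ∈ partsOn n (i + 1), φ τ' :=
    Finset.sum_filter _ _
  have hmaps : ∀ τ' ∈ partsOn n (i + 1), restrictFirst n i τ' ∈ partsOn n i := by
    intro τ' hτ'
    exact mem_partsOn.2 (restrict_isPartitionOn (Nat.le_succ i) (mem_partsOn.1 hτ'))
  have h2 : ∑ τ' ∈ partsOn n (i + 1), φ τ'
      = ∑ τ ∈ partsOn n i, ∑ τ' ∈ (partsOn n (i + 1)).filter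
          (fun τ' => restrictFirst n i τ' = τ), φ τ' :=
    (Finset.sum_fiberwise_of_maps_to hmaps φ).symm
  have h3 : ∀ τ ∈ partsOn n i,
      ∑ τ' ∈ (partsOn n (i + 1)).filter (fun τ' => restrictFirst n i τ' = τ), φ τ'
        = (if τ.card = j then ∏ B ∈ τ, gblk a B.card else 0)
          + ((i : ℝ) - a * ((j : ℝ) + 1))
            * (if τ.card = j + 1 then ∏ B ∈ τ, gblk a B.card else 0) := by
    intro τ hτm
    have hτ := mem_partsOn.1 hτm
    rw [sum_ext' hτ hx φ]
    have hA : φ (insert {x} τ) = (if τ.card = j then ∏ B ∈ τ, gblk a B.card else 0) := by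
      rw [hφ]
      simp only
      rw [card_extNew hτ hx, prod_extNew ha hτ hx]
      by_cases hc : τ.card = j
      · rw [if_pos (by omega), if_pos hc]
      · rw [if_neg (by omega), if_neg hc]
    have hB : ∑ B ∈ τ, φ (insert (insert x B) (τ.erase B))
        = ((i : ℝ) - a * ((j : ℝ) + 1))
          * (if τ.card = j + 1 then ∏ B ∈ τ, gblk a B.card else 0) := by
      by_cases hc : τ.card = j + 1
      · rw [if_pos hc]
        have hterm : ∀ B ∈ τ, φ (insert (insert x B) (τ.erase B))
            = ((B.card : ℝ) - a) * ∏ C ∈ τ, gblk a C.card := by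
          intro B hBm
          rw [hφ]
          simp only
          rw [card_extOld hτ hx hBm, if_pos hc, prod_extOld ha hτ hx hBm]
        rw [Finset.sum_congr rfl hterm, ← Finset.sum_mul]
        congr 1
        have hcards : ∑ B ∈ τ, B.card = i := sum_card_blocks (le_of_lt hi) hτ
        have hcardsR : ∑ B ∈ τ, ((B.card : ℕ) : ℝ) = (i : ℝ) := by
          exact_mod_cast congrArg (Nat.cast : ℕ → ℝ) hcards
        rw [Finset.sum_sub_distrib, hcardsR, Finset.sum_const, nsmul_eq_mul, hc]
        push_cast
        ring
      · rw [if_neg hc, mul_zero]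
        apply Finset.sum_eq_zero
        intro B hBm
        rw [hφ]
        simp only
        rw [card_extOld hτ hx hBm, if_neg hc]
    rw [hA, hB]
  rw [h1, h2, Finset.sum_congr rfl h3, Finset.sum_add_distrib]
  have e1 : ∑ τ ∈ partsOn n i, (if τ.card = j then ∏ B ∈ τ, gblk a B.card else 0)
      = Wsum a n i j := (Finset.sum_filter _ _).symm
  have e2 : ∑ τ ∈ partsOn n i, ((i : ℝ) - a * ((j : ℝ) + 1))
        * (if τ.card = j + 1 then ∏ B ∈ τ, gblk a B.card else 0)
      = ((i : ℝ) - a * ((j : ℝ) + 1)) * Wsum a n i (j + 1) := by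
    rw [← Finset.mul_sum]
    congr 1
    exact (Finset.sum_filter _ _).symm
  rw [e1, e2]
  ring

lemma Wsum_zero_zero : Wsum a n 0 0 = 1 := by
  have hset : (partsOn n 0).filter (fun τ => τ.card = 0) = {∅} := by
    ext τ
    simp only [Finset.mem_filter, Finset.mem_singleton, Finset.card_eq_zero, mem_partsOn]
    constructor
    · rintro ⟨_, rfl⟩; rfl
    · rintro rfl
      exact ⟨⟨Finset.notMem_empty _, fun B hB => absurd hB (Finset.notMem_empty _),
        fun y hy => absurd hy (by omega)⟩, rfl⟩
  rw [Wsum, hset, Finset.sum_singleton, Finset.prod_empty]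

lemma Wsum_zero_card_ne (j : ℕ) (hj : j ≠ 0) : Wsum a n 0 j = 0 := by
  apply Finset.sum_eq_zero
  intro τ hτ
  rw [Finset.mem_filter, mem_partsOn] at hτ
  obtain ⟨⟨h0, hbd, _⟩, hcard⟩ := hτ
  exfalso
  apply hj
  rw [← hcard, Finset.card_eq_zero]
  apply Finset.eq_empty_of_forall_notMem
  intro B hB
  obtain ⟨y, hy⟩ := blocks_nonempty ⟨h0, hbd, by intro y hy; omega⟩ hB
  exact absurd (hbd B hB y hy) (by omega)

lemma Wsum_pos_zero {i : ℕ} (hi1 : 1 ≤ i) (hin : i ≤ n) : Wsum a n i 0 = 0 := by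
  apply Finset.sum_eq_zero
  intro τ hτ
  rw [Finset.mem_filter, mem_partsOn] at hτ
  obtain ⟨⟨h0, hbd, hex⟩, hcard⟩ := hτ
  exfalso
  rw [Finset.card_eq_zero] at hcard
  subst hcard
  obtain ⟨B, ⟨hB, _⟩, _⟩ := hex ⟨0, by omega⟩ (by show 0 < i; omega)
  exact absurd hB (Finset.notMem_empty _)

lemma Wsum_eq_genStirling (ha : a < 1) :
    ∀ i ≤ n, ∀ j, Wsum a n i j = genStirling a i j := by
  intro i
  induction i with
  | zero =>
    intro _ j
    cases j with
    | zero => rw [Wsum_zero_zero, genStirling_zero_zero]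
    | succ j => rw [Wsum_zero_card_ne (j + 1) (by omega), genStirling_zero_succ]
  | succ i ih =>
    intro hin j
    have hi : i < n := by omega
    cases j with
    | zero => rw [Wsum_pos_zero (by omega) hin, genStirling_succ_zero]
    | succ j =>
      rw [Wsum_succ ha hi j, ih (by omega) (j + 1), ih (by omega) j,
        genStirling_succ ha i j]

end WsumSec

variable {γ0 p : ℝ}

lemma mem_partitionsOf {π : Finset (Finset (Fin n))} :
    π ∈ partitionsOf n ↔ IsPartition π := by simp [partitionsOf]

noncomputable def Vw (γ0 a p : ℝ) {n : ℕ} (P : Finset (Finset (Fin n))) : ℝ :=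
  γ0 ^ P.card * p ^ (-(a * (P.card : ℝ))) * ∏ B ∈ P, gblk a B.card

lemma Vw_extNew (ha : a < 1) (hp0 : 0 < p) {i : ℕ} {τ : Finset (Finset (Fin n))}
    {x : Fin n} (hτ : IsPartitionOn n i τ) (hx : (x : ℕ) = i) :
    Vw γ0 a p (insert {x} τ) = γ0 * p ^ (-a) * Vw γ0 a p τ := by
  rw [Vw, Vw, card_extNew hτ hx, prod_extNew ha hτ hx]
  have hexp : -(a * ((τ.card + 1 : ℕ) : ℝ)) = -(a * (τ.card : ℝ)) + (-a) := by
    push_cast; ring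
  rw [hexp, Real.rpow_add hp0, pow_succ]
  ring

lemma Vw_extOld (ha : a < 1) {i : ℕ} {τ : Finset (Finset (Fin n))}
    {x : Fin n} (hτ : IsPartitionOn n i τ) (hx : (x : ℕ) = i)
    {B₀ : Finset (Fin n)} (hB₀ : B₀ ∈ τ) :
    Vw γ0 a p (insert (insert x B₀) (τ.erase B₀)) = ((B₀.card : ℝ) - a) * Vw γ0 a p τ := by
  rw [Vw, Vw, card_extOld hτ hx hB₀, prod_extOld ha hτ hx hB₀]
  ring

lemma Gsum (ha : a < 1) (hp0 : 0 < p) :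
    ∀ d i, i + d = n → ∀ τ : Finset (Finset (Fin n)), IsPartitionOn n i τ →
      ∑ π ∈ (partitionsOf n).filter (fun π => restrictFirst n i π = τ), Vw γ0 a p π
        = Vw γ0 a p τ * Rrec γ0 a p n i τ.card := by
  intro d
  induction d with
  | zero =>
    intro i hi τ hτ
    have hin : i = n := by omega
    subst hin
    have hfil : (partitionsOf i).filter (fun π => restrictFirst i i π = τ) = {τ} := by
      ext π
      rw [Finset.mem_filter, mem_partitionsOf, Finset.mem_singleton]
      constructor
      · rintro ⟨hπ, hr⟩
        rw [← hr, restrict_self (isPartitionOn_top.2 hπ)]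
      · rintro rfl
        exact ⟨isPartitionOn_top.1 hτ, restrict_self hτ⟩
    rw [hfil, Finset.sum_singleton, Rrec, dif_pos (le_refl i), mul_one]
  | succ d ih =>
    intro i hi τ hτ
    have hilt : i < n := by omega
    set x : Fin n := ⟨i, hilt⟩ with hxdef
    have hx : (x : ℕ) = i := rfl
    have hmaps : ∀ π ∈ (partitionsOf n).filter (fun π => restrictFirst n i π = τ),
        restrictFirst n (i + 1) π ∈ (partsOn n (i + 1)).filter
          (fun τ' => restrictFirst n i τ' = τ) := by
      intro π hπ
      rw [Finset.mem_filter] at hπ ⊢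
      obtain ⟨hπm, hr⟩ := hπ
      refine ⟨mem_partsOn.2 (restrict_isPartitionOn (by omega)
        (isPartitionOn_top.2 (mem_partitionsOf.1 hπm))), ?_⟩
      rw [restrict_comp (by omega), hr]
    have hfib := (Finset.sum_fiberwise_of_maps_to hmaps (Vw γ0 a p)).symm
    rw [hfib]
    have hfibeq : ∀ τ' ∈ (partsOn n (i + 1)).filter (fun τ' => restrictFirst n i τ' = τ),
        ∑ π ∈ ((partitionsOf n).filter (fun π => restrictFirst n i π = τ)).filter
            (fun π => restrictFirst n (i + 1) π = τ'), Vw γ0 a p π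
          = Vw γ0 a p τ' * Rrec γ0 a p n (i + 1) τ'.card := by
      intro τ' hτ'
      rw [Finset.mem_filter] at hτ'
      obtain ⟨hτ'm, hr'⟩ := hτ'
      have hτ'p : IsPartitionOn n (i + 1) τ' := mem_partsOn.1 hτ'm
      have hsets : ((partitionsOf n).filter (fun π => restrictFirst n i π = τ)).filter
            (fun π => restrictFirst n (i + 1) π = τ')
          = (partitionsOf n).filter (fun π => restrictFirst n (i + 1) π = τ') := by
        ext π
        simp only [Finset.mem_filter]
        constructor
        · rintro ⟨⟨h1, _⟩, h3⟩; exact ⟨h1, h3⟩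
        · rintro ⟨h1, h3⟩
          refine ⟨⟨h1, ?_⟩, h3⟩
          rw [← restrict_comp (Nat.le_succ i) π, h3, hr']
      rw [hsets]
      exact ih (i + 1) (by omega) τ' hτ'p
    rw [Finset.sum_congr rfl hfibeq]
    rw [sum_ext' hτ hx (fun τ' => Vw γ0 a p τ' * Rrec γ0 a p n (i + 1) τ'.card)]
    rw [Vw_extNew ha hp0 hτ hx, card_extNew hτ hx]
    have hterm : ∀ B ∈ τ,
        Vw γ0 a p (insert (insert x B) (τ.erase B))
            * Rrec γ0 a p n (i + 1) (insert (insert x B) (τ.erase B)).card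
          = ((B.card : ℝ) - a) * Vw γ0 a p τ * Rrec γ0 a p n (i + 1) τ.card := by
      intro B hB
      rw [Vw_extOld ha hτ hx hB, card_extOld hτ hx hB]
    rw [Finset.sum_congr rfl hterm]
    have hsum : ∑ B ∈ τ, ((B.card : ℝ) - a) * Vw γ0 a p τ * Rrec γ0 a p n (i + 1) τ.card
        = (((i : ℝ)) - a * (τ.card : ℝ)) * Vw γ0 a p τ * Rrec γ0 a p n (i + 1) τ.card := by
      rw [← Finset.sum_mul, ← Finset.sum_mul]
      congr 2
      have hcards : ∑ B ∈ τ, B.card = i := sum_card_blocks (le_of_lt hilt) hτ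
      have hcardsR : ∑ B ∈ τ, ((B.card : ℕ) : ℝ) = (i : ℝ) := by
        exact_mod_cast congrArg (Nat.cast : ℕ → ℝ) hcards
      rw [Finset.sum_sub_distrib, hcardsR, Finset.sum_const, nsmul_eq_mul]
      ring
    rw [hsum]
    conv_rhs => rw [Rrec]
    rw [dif_neg (by omega : ¬ n ≤ i)]
    ring

end CRSF

open CRSF

/-- Distribution of the number of clusters among the first i elements in a sample
of size n: for 1 ≤ j ≤ i ≤ n, the sum of w_n(π) over all set partitions π of
{1,…,n} whose restriction to {1,…,i} has exactly j blocks equals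
γ0^j · p^{−a·j} · S_a(i,j) · R_{n,γ0,a,p}(i,j) / D_n. -/
theorem crsf_cluster_number_distribution (j i n : ℕ) (hj : 1 ≤ j) (hji : j ≤ i)
    (hin : i ≤ n) (γ0 a p : ℝ) (hγ : 0 < γ0) (ha : a < 1) (hp0 : 0 < p) (hp1 : p < 1) :
    ∑ π ∈ (partitionsOf n).filter (fun π => (restrictFirst n i π).card = j),
        crsfW γ0 a p n π
      = γ0 ^ j * p ^ (-(a * (j : ℝ))) * genStirling a i j * Rrec γ0 a p n i j /
          Dsum γ0 a p n := by
  classical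
  have hVw : ∀ π : Finset (Finset (Fin n)), crsfW γ0 a p n π = Vw γ0 a p π / Dsum γ0 a p n :=
    fun π => rfl
  rw [Finset.sum_congr rfl (fun π _ => hVw π), ← Finset.sum_div]
  congr 1
  have hmaps : ∀ π ∈ (partitionsOf n).filter (fun π => (restrictFirst n i π).card = j),
      restrictFirst n i π ∈ (partsOn n i).filter (fun τ => τ.card = j) := by
    intro π hπ
    rw [Finset.mem_filter] at hπ ⊢
    exact ⟨mem_partsOn.2 (restrict_isPartitionOn hin
      (isPartitionOn_top.2 (mem_partitionsOf.1 hπ.1))), hπ.2⟩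
  rw [← Finset.sum_fiberwise_of_maps_to hmaps (Vw γ0 a p)]
  have hval : ∀ τ ∈ (partsOn n i).filter (fun τ => τ.card = j),
      ∑ π ∈ ((partitionsOf n).filter (fun π => (restrictFirst n i π).card = j)).filter
          (fun π => restrictFirst n i π = τ), Vw γ0 a p π
        = (γ0 ^ j * p ^ (-(a * (j : ℝ))) * Rrec γ0 a p n i j) * ∏ B ∈ τ, gblk a B.card := by
    intro τ hτm
    rw [Finset.mem_filter] at hτm
    obtain ⟨hτm, hcard⟩ := hτm
    have hτ : IsPartitionOn n i τ := mem_partsOn.1 hτm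
    have hsets : ((partitionsOf n).filter (fun π => (restrictFirst n i π).card = j)).filter
          (fun π => restrictFirst n i π = τ)
        = (partitionsOf n).filter (fun π => restrictFirst n i π = τ) := by
      ext π
      simp only [Finset.mem_filter]
      constructor
      · rintro ⟨⟨h1, _⟩, h3⟩; exact ⟨h1, h3⟩
      · rintro ⟨h1, h3⟩
        exact ⟨⟨h1, by rw [h3, hcard]⟩, h3⟩
    rw [hsets, Gsum ha hp0 (n - i) i (by omega) τ hτ, Vw, hcard]
    ring
  rw [Finset.sum_congr rfl hval, ← Finset.mul_sum]
  have hW : ∑ τ ∈ (partsOn n i).filter (fun τ => τ.card = j), ∏ B ∈ τ, gblk a B.card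
      = genStirling a i j := by
    rw [← Wsum]
    exact Wsum_eq_genStirling ha i hin j
  rw [hW]
  ring
end

section
/- Let γ0 > 0, a < 1 with a ≠ 0, 0 < p < 1 be real, and set c := (1 − (1 − p)^a)/(a·p^a). Then the prior Simpson's index of diversity under the generalized negative binomial process satisfies Σ_{n=2}^∞ [γ0 · p^{−a} · R_{n,γ0,a,p}(2,2)/R_{n,γ0,a,p}(1,1)] · p_N(n)/(1 − p_N(0) − p_N(1)) = [γ0^2 · p^{−2a} · e^{−γ0 c}/(1 − e^{−γ0 c} − γ0 · p^{1−a} · e^{−γ0 c})] · Σ_{n=2}^∞ (p^n/n!) · R_{n,γ0,a,p}(2,2), where both series converge. -/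
open scoped Classical BigOperators

/-- The generalized negative binomial probability mass function
`p_N(n) = (p^n/n!) · exp(−γ0·(1 − (1−p)^a)/(a·p^a)) · D_n`. -/
noncomputable def gnbPMF (γ0 a p : ℝ) (n : ℕ) : ℝ :=
  p ^ n / (n.factorial : ℝ) * Real.exp (-γ0 * (1 - (1 - p) ^ a) / (a * p ^ a)) *
    Dsum γ0 a p n

noncomputable def gw (a : ℝ) (m : ℕ) : ℝ :=
  if m = 0 then 0 else Real.Gamma ((m : ℝ) - a) / ((m.factorial : ℝ) * Real.Gamma (1 - a))

lemma gw_zero (a : ℝ) : gw a 0 = 0 := rfl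

lemma gw_one {a : ℝ} (ha : a < 1) : gw a 1 = 1 := by
  have hG1 : Real.Gamma (1 - a) ≠ 0 := (Real.Gamma_pos_of_pos (by linarith)).ne'
  simp [gw, Nat.factorial, div_self hG1]

lemma gw_pos {a : ℝ} (ha : a < 1) {m : ℕ} (hm : 0 < m) : 0 < gw a m := by
  have h1 : (0:ℝ) < (m:ℝ) - a := by
    have : (1:ℝ) ≤ (m:ℝ) := by exact_mod_cast hm
    linarith
  have h2 : (0:ℝ) < Real.Gamma ((m:ℝ) - a) := Real.Gamma_pos_of_pos h1
  have h3 : (0:ℝ) < Real.Gamma (1 - a) := Real.Gamma_pos_of_pos (by linarith)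
  have h4 : (0:ℝ) < (m.factorial : ℝ) := by exact_mod_cast m.factorial_pos
  rw [gw, if_neg hm.ne']
  positivity

lemma gw_nonneg {a : ℝ} (ha : a < 1) (m : ℕ) : 0 ≤ gw a m := by
  rcases Nat.eq_zero_or_pos m with h | h
  · simp [h, gw_zero]
  · exact (gw_pos ha h).le

lemma gw_step {a : ℝ} (ha : a < 1) (k : ℕ) :
    ((k : ℝ) + 1) * gw a (k + 1) = (if k = 0 then (1:ℝ) else 0) + ((k : ℝ) - a) * gw a k := by
  rcases Nat.eq_zero_or_pos k with rfl | hk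
  · simp [gw_one ha, gw_zero]
  · have hkne : k ≠ 0 := hk.ne'
    have hG : Real.Gamma (((k:ℕ):ℝ) + 1 - a) = ((k:ℝ) - a) * Real.Gamma ((k:ℝ) - a) := by
      have h1 : ((k:ℝ) - a) ≠ 0 := by
        have : (1:ℝ) ≤ (k:ℝ) := by exact_mod_cast hk
        intro h; nlinarith
      have := Real.Gamma_add_one h1
      rw [← this]; ring_nf
    rw [gw, gw, if_neg (Nat.succ_ne_zero k), if_neg hkne, if_neg hkne]
    have hfac : ((k+1).factorial : ℝ) = ((k:ℝ)+1) * (k.factorial : ℝ) := by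
      rw [Nat.factorial_succ]; push_cast; ring
    have hkfac : (k.factorial : ℝ) ≠ 0 := by exact_mod_cast k.factorial_pos.ne'
    have hG1 : Real.Gamma (1 - a) ≠ 0 := (Real.Gamma_pos_of_pos (by linarith)).ne'
    have hcast : ((k+1 : ℕ) : ℝ) = (k:ℝ) + 1 := by push_cast; ring
    rw [hcast, hG, hfac]
    field_simp
    ring


noncomputable def csum (a : ℝ) (n l : ℕ) : ℝ :=
  ∑ f ∈ (Finset.Nat.antidiagonalTuple l n).filter (fun f => ∀ k, 0 < f k),
    ∏ k, gw a (f k)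

lemma csum_nonneg {a : ℝ} (ha : a < 1) (n l : ℕ) : 0 ≤ csum a n l :=
  Finset.sum_nonneg fun f _ => Finset.prod_nonneg fun k _ => gw_nonneg ha _

lemma csum_zero_zero (a : ℝ) : csum a 0 0 = 1 := by
  simp [csum]

lemma csum_succ_zero (a : ℝ) (n : ℕ) : csum a (n + 1) 0 = 0 := by
  simp [csum]

lemma csum_zero' (a : ℝ) (n : ℕ) : csum a n 0 = if n = 0 then 1 else 0 := by
  cases n with
  | zero => simp [csum_zero_zero]
  | succ n => simp [csum_succ_zero]

lemma csum_eq_zero_of_lt {a : ℝ} {n l : ℕ} (h : n < l) : csum a n l = 0 := by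
  apply Finset.sum_eq_zero
  intro f hf
  rw [Finset.mem_filter, Finset.Nat.mem_antidiagonalTuple] at hf
  exfalso
  have hle : l ≤ ∑ i, f i := by
    calc l = ∑ _i : Fin l, 1 := by simp
    _ ≤ ∑ i, f i := Finset.sum_le_sum fun i _ => hf.2 i
  omega

lemma csum_one {a : ℝ} (n : ℕ) : csum a n 1 = gw a n := by
  rcases Nat.eq_zero_or_pos n with rfl | hn
  · rw [csum_eq_zero_of_lt (by norm_num), gw_zero]
  · rw [csum]
    rw [Finset.Nat.antidiagonalTuple_one]
    rw [Finset.filter_singleton]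
    rw [if_pos]
    · simp [Fin.prod_univ_one]
    · intro k
      simpa using hn

lemma csum_succ_left (a : ℝ) (n l : ℕ) :
    csum a n (l + 1) = ∑ x ∈ Finset.HasAntidiagonal.antidiagonal n, gw a x.1 * csum a x.2 l := by
  classical
  rw [← Finset.sum_filter_of_ne (p := fun x : ℕ × ℕ => 0 < x.1)
    (by intro x hx hne
        by_contra h
        have hx1 : x.1 = 0 := by omega
        exact hne (by rw [hx1, gw_zero, zero_mul]))]
  simp_rw [csum, Finset.mul_sum]
  rw [Finset.sum_sigma']
  refine (Finset.sum_nbij'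
    (fun (p : (_ : ℕ × ℕ) × (Fin l → ℕ)) => (Fin.cons p.1.1 p.2 : Fin (l+1) → ℕ))
    (fun (f : Fin (l+1) → ℕ) =>
      (⟨(f 0, n - f 0), Fin.tail f⟩ : (_ : ℕ × ℕ) × (Fin l → ℕ)))
    ?_ ?_ ?_ ?_ ?_).symm
  · rintro ⟨⟨m, q⟩, g⟩ hp
    simp only [Finset.mem_sigma, Finset.mem_filter, Finset.Nat.mem_antidiagonalTuple,
      Finset.HasAntidiagonal.mem_antidiagonal] at hp ⊢
    obtain ⟨⟨hmq, hm⟩, hg, hgpos⟩ := hp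
    constructor
    · rw [Fin.sum_cons, hg]; exact hmq
    · intro k
      refine Fin.cases ?_ ?_ k
      · simpa using hm
      · intro i; simpa using hgpos i
  · intro f hf
    simp only [Finset.mem_filter, Finset.Nat.mem_antidiagonalTuple] at hf
    obtain ⟨hsum, hpos⟩ := hf
    have h0 : f 0 + ∑ i, Fin.tail f i = n := by
      rw [← hsum, Fin.sum_univ_succ]; rfl
    simp only [Finset.mem_sigma, Finset.mem_filter, Finset.Nat.mem_antidiagonalTuple,
      Finset.HasAntidiagonal.mem_antidiagonal]
    refine ⟨⟨by omega, hpos 0⟩, by omega, fun k => hpos k.succ⟩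
  · rintro ⟨⟨m, q⟩, g⟩ hp
    simp only [Finset.mem_sigma, Finset.mem_filter, Finset.HasAntidiagonal.mem_antidiagonal] at hp
    have h0 : (Fin.cons m g : Fin (l+1) → ℕ) 0 = m := rfl
    have hq : n - m = q := by omega
    simp [h0, hq, Fin.tail_cons]
  · intro f hf
    exact Fin.cons_self_tail f
  · rintro ⟨⟨m, q⟩, g⟩ hp
    rw [Fin.prod_univ_succ]
    simp [Fin.cons_zero, Fin.cons_succ]

lemma csum_rec {a : ℝ} (ha : a < 1) :
    ∀ l n : ℕ, ((n : ℝ) + 1) * csum a (n + 1) (l + 1)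
      = ((l : ℝ) + 1) * csum a n l + ((n : ℝ) - a * ((l : ℝ) + 1)) * csum a n (l + 1) := by
  intro l
  induction l with
  | zero =>
    intro n
    simp only [Nat.cast_zero, zero_add, Nat.zero_add]
    rw [csum_one, csum_one, csum_zero', gw_step ha n]
    ring
  | succ l ih =>
    intro n
    rcases n with _ | k
    · rw [csum_eq_zero_of_lt (by omega), csum_eq_zero_of_lt (by omega),
        csum_eq_zero_of_lt (by omega)]
      ring
    · have hA : csum a (k+1) (l+1)
          = ∑ p ∈ Finset.HasAntidiagonal.antidiagonal k, gw a (p.1+1) * csum a p.2 l := by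
        rw [csum_succ_left, Finset.Nat.sum_antidiagonal_succ]
        simp [gw_zero]
      have hB : csum a (k+1) (l+1+1)
          = ∑ p ∈ Finset.HasAntidiagonal.antidiagonal k, gw a (p.1+1) * csum a p.2 (l+1) := by
        rw [csum_succ_left, Finset.Nat.sum_antidiagonal_succ]
        simp [gw_zero]
      have e1 : csum a (k+1+1) (l+1+1)
          = ∑ y ∈ Finset.HasAntidiagonal.antidiagonal (k+1), gw a (y.1+1) * csum a y.2 (l+1) := by
        rw [csum_succ_left, Finset.Nat.sum_antidiagonal_succ]
        simp [gw_zero]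
      have split : ∀ y ∈ Finset.HasAntidiagonal.antidiagonal (k+1),
          (((k:ℝ)+1)+1) * (gw a (y.1+1) * csum a y.2 (l+1))
            = (if y.1 = 0 then (1:ℝ) else 0) * csum a y.2 (l+1)
              + ((y.1:ℝ) - a) * gw a y.1 * csum a y.2 (l+1)
              + gw a (y.1+1) * ((y.2:ℝ) * csum a y.2 (l+1)) := by
        intro y hy
        have hy' : y.1 + y.2 = k+1 := Finset.HasAntidiagonal.mem_antidiagonal.mp hy
        have hc : ((y.1:ℝ)) + (y.2:ℝ) = (k:ℝ)+1 := by exact_mod_cast congrArg (Nat.cast : ℕ → ℝ) hy'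
        have hstep := gw_step ha y.1
        linear_combination (csum a y.2 (l+1)) * hstep
          - (gw a (y.1+1) * csum a y.2 (l+1)) * hc
      have main : (((k:ℝ)+1)+1) * csum a (k+1+1) (l+1+1)
          = (∑ y ∈ Finset.HasAntidiagonal.antidiagonal (k+1), (if y.1 = 0 then (1:ℝ) else 0) * csum a y.2 (l+1))
            + (∑ y ∈ Finset.HasAntidiagonal.antidiagonal (k+1), ((y.1:ℝ) - a) * gw a y.1 * csum a y.2 (l+1))
            + (∑ y ∈ Finset.HasAntidiagonal.antidiagonal (k+1), gw a (y.1+1) * ((y.2:ℝ) * csum a y.2 (l+1))) := by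
        rw [e1, Finset.mul_sum, Finset.sum_congr rfl split, Finset.sum_add_distrib,
          Finset.sum_add_distrib]
      have hS1 : ∑ y ∈ Finset.HasAntidiagonal.antidiagonal (k+1), (if y.1 = 0 then (1:ℝ) else 0) * csum a y.2 (l+1)
          = csum a (k+1) (l+1) := by
        rw [Finset.Nat.sum_antidiagonal_succ]
        have h2 : ∑ p ∈ Finset.HasAntidiagonal.antidiagonal k,
            (if p.1 + 1 = 0 then (1:ℝ) else 0) * csum a p.2 (l+1) = 0 :=
          Finset.sum_eq_zero (by intro p hp; simp)
        rw [h2]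
        simp
      have hS2 : ∑ y ∈ Finset.HasAntidiagonal.antidiagonal (k+1), ((y.1:ℝ) - a) * gw a y.1 * csum a y.2 (l+1)
          = ∑ p ∈ Finset.HasAntidiagonal.antidiagonal k,
              (((p.1:ℝ)+1) - a) * gw a (p.1+1) * csum a p.2 (l+1) := by
        rw [Finset.Nat.sum_antidiagonal_succ]
        rw [gw_zero]
        push_cast
        ring_nf
      have hS3 : ∑ y ∈ Finset.HasAntidiagonal.antidiagonal (k+1), gw a (y.1+1) * ((y.2:ℝ) * csum a y.2 (l+1))
          = ∑ p ∈ Finset.HasAntidiagonal.antidiagonal k,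
              gw a (p.1+1) * (((p.2:ℝ)+1) * csum a (p.2+1) (l+1)) := by
        rw [Finset.Nat.sum_antidiagonal_succ']
        push_cast
        ring_nf
      have hS23 : (∑ p ∈ Finset.HasAntidiagonal.antidiagonal k,
              (((p.1:ℝ)+1) - a) * gw a (p.1+1) * csum a p.2 (l+1))
            + (∑ p ∈ Finset.HasAntidiagonal.antidiagonal k,
              gw a (p.1+1) * (((p.2:ℝ)+1) * csum a (p.2+1) (l+1)))
          = ((l:ℝ)+1) * csum a (k+1) (l+1)
            + (((k:ℝ)+1) - a*((l:ℝ)+1+1)) * csum a (k+1) (l+1+1) := by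
        rw [hA, hB, Finset.mul_sum, Finset.mul_sum, ← Finset.sum_add_distrib,
          ← Finset.sum_add_distrib]
        apply Finset.sum_congr rfl
        intro p hp
        have hp' : p.1 + p.2 = k := Finset.HasAntidiagonal.mem_antidiagonal.mp hp
        have hc : ((p.1:ℝ)) + (p.2:ℝ) = (k:ℝ) := by exact_mod_cast congrArg (Nat.cast : ℕ → ℝ) hp'
        have hih := ih p.2
        linear_combination gw a (p.1+1) * hih
          + (gw a (p.1+1) * csum a p.2 (l+1)) * hc
      push_cast
      rw [main, hS1, hS2, hS3]
      linear_combination hS23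

lemma genStirling_eq (a : ℝ) (n l : ℕ) :
    genStirling a n l = (n.factorial : ℝ) / (l.factorial : ℝ) * csum a n l := by
  rw [genStirling, csum]
  congr 1
  apply Finset.sum_congr rfl
  intro f hf
  apply Finset.prod_congr rfl
  intro k _
  rw [Finset.mem_filter] at hf
  rw [gw, if_neg (hf.2 k).ne']

lemma genStirling_rec {a : ℝ} (ha : a < 1) (n l : ℕ) :
    genStirling a (n+1) (l+1)
      = genStirling a n l + ((n:ℝ) - a * ((l:ℝ)+1)) * genStirling a n (l+1) := by
  rw [genStirling_eq, genStirling_eq, genStirling_eq]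
  have h := csum_rec ha l n
  have hfn : ((n.factorial : ℕ):ℝ) ≠ 0 := by exact_mod_cast n.factorial_pos.ne'
  have hfl : ((l.factorial : ℕ):ℝ) ≠ 0 := by exact_mod_cast l.factorial_pos.ne'
  have hl1 : ((l:ℝ)+1) ≠ 0 := by positivity
  have hn1 : ((n:ℝ)+1) ≠ 0 := by positivity
  push_cast [Nat.factorial_succ]
  calc ((n:ℝ) + 1) * (n.factorial:ℝ) / (((l:ℝ) + 1) * (l.factorial:ℝ)) * csum a (n + 1) (l + 1)
      = ((n.factorial:ℝ) / (((l:ℝ) + 1) * (l.factorial:ℝ))) * (((n:ℝ)+1) * csum a (n+1) (l+1)) := by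
        ring
    _ = ((n.factorial:ℝ) / (((l:ℝ) + 1) * (l.factorial:ℝ))) *
        (((l:ℝ) + 1) * csum a n l + ((n:ℝ) - a * ((l:ℝ) + 1)) * csum a n (l + 1)) := by rw [h]
    _ = (n.factorial:ℝ) / (l.factorial:ℝ) * csum a n l
        + ((n:ℝ) - a * ((l:ℝ)+1)) * ((n.factorial:ℝ) / (((l:ℝ) + 1) * (l.factorial:ℝ)) * csum a n (l+1)) := by
        field_simp

lemma genStirling_zero_zero (a : ℝ) : genStirling a 0 0 = 1 := by
  rw [genStirling_eq, csum_zero_zero]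
  simp

lemma genStirling_succ_zero (a : ℝ) (n : ℕ) : genStirling a (n+1) 0 = 0 := by
  rw [genStirling_eq, csum_succ_zero, mul_zero]

lemma genStirling_eq_zero_of_lt {a : ℝ} {n l : ℕ} (h : n < l) : genStirling a n l = 0 := by
  rw [genStirling_eq, csum_eq_zero_of_lt h, mul_zero]

lemma genStirling_one_one {a : ℝ} (ha : a < 1) : genStirling a 1 1 = 1 := by
  rw [genStirling_eq, csum_one, gw_one ha]
  simp

lemma Rrec_of_le (γ0 a p : ℝ) {n i : ℕ} (h : n ≤ i) (j : ℕ) : Rrec γ0 a p n i j = 1 := by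
  rw [Rrec]
  simp [h]

lemma Rrec_of_lt (γ0 a p : ℝ) {n i : ℕ} (h : i < n) (j : ℕ) :
    Rrec γ0 a p n i j = ((i : ℝ) - a * (j : ℝ)) * Rrec γ0 a p n (i + 1) j
      + γ0 * p ^ (-a) * Rrec γ0 a p n (i + 1) (j + 1) := by
  rw [Rrec]
  simp [Nat.not_le.mpr h]

noncomputable def useq (γ0 a p : ℝ) : ℕ → ℕ → ℝ
  | 0, j => if j = 1 then 1 else 0
  | (t+1), 0 => (((t:ℝ)+1) - a * 0) * useq γ0 a p t 0
  | (t+1), (j+1) => (((t:ℝ)+1) - a * ((j:ℝ)+1)) * useq γ0 a p t (j+1)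
      + γ0 * p ^ (-a) * useq γ0 a p t j

lemma useq_zero_right (γ0 a p : ℝ) : ∀ t, useq γ0 a p t 0 = 0
  | 0 => by simp [useq]
  | (t+1) => by rw [useq, useq_zero_right γ0 a p t, mul_zero]

lemma useq_eq_zero_of_gt (γ0 a p : ℝ) : ∀ t j, t + 1 < j → useq γ0 a p t j = 0 := by
  intro t
  induction t with
  | zero =>
    intro j hj
    rw [useq]
    rw [if_neg (by omega)]
  | succ t ih =>
    intro j hj
    match j, hj with
    | (j+1), hj =>
      rw [useq, ih (j+1) (by omega), ih j (by omega), mul_zero, mul_zero, add_zero]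

lemma Rrec_invariant (γ0 a p : ℝ) (n : ℕ) :
    ∀ t, t + 1 ≤ n →
      Rrec γ0 a p n 1 1
        = ∑ j ∈ Finset.range (t+2), useq γ0 a p t j * Rrec γ0 a p n (t+1) j := by
  intro t
  induction t with
  | zero =>
    intro _
    rw [Finset.sum_range_succ, Finset.sum_range_one]
    simp [useq]
  | succ t ih =>
    intro ht
    rw [ih (by omega)]
    have hstep : ∀ j, Rrec γ0 a p n (t+1) j
        = (((t:ℝ)+1) - a * (j : ℝ)) * Rrec γ0 a p n (t+2) j
          + γ0 * p ^ (-a) * Rrec γ0 a p n (t+2) (j+1) := by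
      intro j
      have := Rrec_of_lt γ0 a p (n := n) (i := t+1) (by omega) j
      push_cast at this ⊢
      convert this using 3 <;> push_cast <;> ring
    -- LHS (old level)
    have lhs_eq : ∑ j ∈ Finset.range (t+2), useq γ0 a p t j * Rrec γ0 a p n (t+1) j
        = (∑ j ∈ Finset.range (t+2),
            (((t:ℝ)+1) - a * (j : ℝ)) * useq γ0 a p t j * Rrec γ0 a p n (t+2) j)
          + (∑ j ∈ Finset.range (t+2),
            γ0 * p ^ (-a) * useq γ0 a p t j * Rrec γ0 a p n (t+2) (j+1)) := by
      rw [← Finset.sum_add_distrib]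
      apply Finset.sum_congr rfl
      intro j _
      rw [hstep j]
      ring
    rw [lhs_eq]
    -- RHS (new level)
    have rhs_eq : ∑ j ∈ Finset.range (t+3), useq γ0 a p (t+1) j * Rrec γ0 a p n (t+2) j
        = (∑ j ∈ Finset.range (t+2),
            (((t:ℝ)+1) - a * ((j:ℝ)+1)) * useq γ0 a p t (j+1) * Rrec γ0 a p n (t+2) (j+1))
          + (∑ j ∈ Finset.range (t+2),
            γ0 * p ^ (-a) * useq γ0 a p t j * Rrec γ0 a p n (t+2) (j+1)) := by
      rw [Finset.sum_range_succ' _ (t+2)]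
      rw [useq_zero_right, zero_mul, add_zero, ← Finset.sum_add_distrib]
      apply Finset.sum_congr rfl
      intro j _
      rw [useq]
      ring
    rw [rhs_eq]
    congr 1
    -- remaining: ∑_{j<t+2} ((t+1) - a j) u t j R (t+2) j = ∑_{j<t+2} ((t+1)-a(j+1)) u t (j+1) R (t+2) (j+1)
    rw [Finset.sum_range_succ' _ (t+1), useq_zero_right, mul_zero, zero_mul, add_zero]
    rw [Finset.sum_range_succ _ (t+1), useq_eq_zero_of_gt γ0 a p t (t+2) (by omega),
      mul_zero, zero_mul, add_zero]
    apply Finset.sum_congr rfl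
    intro j _
    push_cast
    ring

lemma useq_eq {γ0 a p : ℝ} (ha : a < 1) (hp : 0 < p) :
    ∀ t j, useq γ0 a p t (j+1) = γ0^j * p ^ (-(a * (j:ℝ))) * genStirling a (t+1) (j+1) := by
  intro t
  induction t with
  | zero =>
    intro j
    cases j with
    | zero =>
      rw [useq, if_pos rfl, genStirling_one_one ha]
      norm_num
    | succ j =>
      rw [useq, if_neg (by omega), genStirling_eq_zero_of_lt (by omega), mul_zero]
  | succ t ih =>
    intro j
    cases j with
    | zero =>
      rw [useq, ih 0, useq_zero_right, mul_zero, add_zero]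
      have hrec := genStirling_rec ha (t+1) 0
      push_cast at hrec ⊢
      rw [hrec, genStirling_succ_zero]
      norm_num
    | succ j =>
      rw [useq, ih (j+1), ih j]
      have hrec := genStirling_rec ha (t+1) (j+1)
      have hP : p ^ (-(a * ((j:ℝ)+1))) = p ^ (-a) * p ^ (-(a * (j:ℝ))) := by
        rw [← Real.rpow_add hp]
        ring_nf
      push_cast at hrec ⊢
      rw [hrec, hP]
      ring
    
lemma Dsum_eq {γ0 a p : ℝ} (ha : a < 1) (hp : 0 < p) (t : ℕ) :
    Dsum γ0 a p (t+1) = γ0 * p ^ (-a) * Rrec γ0 a p (t+1) 1 1 := by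
  have hR := Rrec_invariant γ0 a p (t+1) t (le_refl _)
  have hbound : ∀ j ∈ Finset.range (t+2),
      useq γ0 a p t j * Rrec γ0 a p (t+1) (t+1) j = useq γ0 a p t j := by
    intro j _
    rw [Rrec_of_le γ0 a p (le_refl _), mul_one]
  rw [Finset.sum_congr rfl hbound] at hR
  rw [Dsum, hR]
  have hu : (Finset.range (t+2)).sum (useq γ0 a p t)
      = ∑ j ∈ Finset.range (t+1), useq γ0 a p t (j+1) := by
    rw [Finset.sum_range_succ' _ (t+1), useq_zero_right, add_zero]
  rw [hu]
  rw [Finset.sum_range_succ' _ (t+1)]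
  have h0 : γ0 ^ 0 * p ^ (-(a * ((0:ℕ):ℝ))) * genStirling a (t+1) 0 = 0 := by
    rw [genStirling_succ_zero, mul_zero]
  rw [h0, add_zero, Finset.mul_sum]
  apply Finset.sum_congr rfl
  intro j _
  rw [useq_eq ha hp]
  have hP : p ^ (-(a * (((j:ℕ)+1:ℕ):ℝ))) = p ^ (-a) * p ^ (-(a * (j:ℝ))) := by
    rw [← Real.rpow_add hp]
    push_cast
    ring_nf
  push_cast at hP ⊢
  rw [hP]
  ring

lemma Rrec_pos {γ0 a p : ℝ} (hγ : 0 < γ0) (ha : a < 1) (hp : 0 < p) (n : ℕ) :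
    ∀ k i j : ℕ, n - i ≤ k → 1 ≤ i → j ≤ i → 0 < Rrec γ0 a p n i j := by
  intro k
  induction k with
  | zero =>
    intro i j hk h1 _
    rw [Rrec_of_le γ0 a p (by omega)]
    norm_num
  | succ k ihk =>
    intro i j hk h1 hj
    by_cases hni : n ≤ i
    · rw [Rrec_of_le γ0 a p hni]; norm_num
    · push_neg at hni
      rw [Rrec_of_lt γ0 a p hni]
      have hji : (j:ℝ) ≤ (i:ℝ) := by exact_mod_cast hj
      have hi1 : (1:ℝ) ≤ (i:ℝ) := by exact_mod_cast h1
      have hcoef : 0 < (i:ℝ) - a * (j:ℝ) := by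
        rcases le_or_gt a 0 with h | h
        · have : a * (j:ℝ) ≤ 0 := mul_nonpos_of_nonpos_of_nonneg h (by positivity)
          linarith
        · nlinarith
      have h2 := ihk (i+1) j (by omega) (by omega) (by omega)
      have h3 := ihk (i+1) (j+1) (by omega) (by omega) (by omega)
      have hx : 0 < γ0 * p ^ (-a) := mul_pos hγ (Real.rpow_pos_of_pos hp _)
      exact add_pos (mul_pos hcoef h2) (mul_pos hx h3)

lemma gw_summable {a x : ℝ} (ha : a < 1) (hx0 : 0 < x) (hx1 : x < 1) :
    Summable (fun m : ℕ => gw a (m+1) * x^(m+1)) := by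
  set r := (1+x)/2 with hr
  have hr1 : r < 1 := by rw [hr]; linarith
  have hrx : 0 < r - x := by rw [hr]; linarith
  set M := Nat.ceil (x*(1-a)/(r-x)) with hM
  apply summable_of_ratio_norm_eventually_le hr1
  filter_upwards [Filter.eventually_ge_atTop M] with m hm
  have hgnn : 0 ≤ gw a (m+1) := gw_nonneg ha _
  have hgnn2 : 0 ≤ gw a (m+2) := gw_nonneg ha _
  have hxp1 : (0:ℝ) < x^(m+1) := pow_pos hx0 _
  have hxp2 : (0:ℝ) < x^(m+2) := pow_pos hx0 _
  rw [Real.norm_eq_abs, Real.norm_eq_abs, abs_of_nonneg (by positivity),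
    abs_of_nonneg (by positivity)]
  -- recursion for gw
  have hstep := gw_step ha (m+1)
  rw [if_neg (Nat.succ_ne_zero m)] at hstep
  push_cast at hstep
  have hm2 : ((m:ℝ)+1+1) ≠ 0 := by positivity
  have hgw2 : gw a (m+1+1) = (((m:ℝ)+1) - a) * gw a (m+1) / (((m:ℝ)+1)+1) := by
    field_simp
    linarith [hstep]
  have hMle : x*(1-a)/(r-x) ≤ (M:ℝ) := Nat.le_ceil _
  have hmM : (M:ℝ) ≤ (m:ℝ) := by exact_mod_cast hm
  have hkey : (((m:ℝ)+1) - a) * x ≤ r * (((m:ℝ)+1)+1) := by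
    have h1 : x*(1-a) ≤ (r-x)*(M:ℝ) := by
      rw [div_le_iff₀ hrx] at hMle
      linarith
    have h2 : (r-x)*(M:ℝ) ≤ (r-x)*(m:ℝ) := by
      apply mul_le_mul_of_nonneg_left hmM hrx.le
    have hr0 : 0 < r := by rw [hr]; linarith
    nlinarith
  have expand : gw a (m+1+1) * x^(m+1+1)
      = ((((m:ℝ)+1) - a) * x / (((m:ℝ)+1)+1)) * (gw a (m+1) * x^(m+1)) := by
    rw [hgw2, pow_succ]
    ring
  rw [expand]
  apply mul_le_mul_of_nonneg_right _ (by positivity)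
  rw [div_le_iff₀ (by positivity)]
  linarith

lemma csum_le_tsum {a x : ℝ} (ha : a < 1) (hx0 : 0 < x) (hx1 : x < 1) :
    ∀ l n : ℕ, csum a n l * x^n ≤ (∑' m : ℕ, gw a (m+1) * x^(m+1))^l := by
  have hsum := gw_summable ha hx0 hx1
  set g := ∑' m : ℕ, gw a (m+1) * x^(m+1) with hg
  have hgnn : 0 ≤ g := tsum_nonneg (fun m => by
    have := gw_nonneg ha (m+1); positivity)
  intro l
  induction l with
  | zero =>
    intro n
    rw [csum_zero', pow_zero]
    rcases n with _ | n
    · simp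
    · simp [pow_nonneg hx0.le]
  | succ l ih =>
    intro n
    rw [csum_succ_left, Finset.sum_mul]
    have hterm : ∀ y ∈ Finset.HasAntidiagonal.antidiagonal n,
        gw a y.1 * csum a y.2 l * x^n ≤ (gw a y.1 * x^y.1) * g^l := by
      intro y hy
      have hy' : y.1 + y.2 = n := Finset.HasAntidiagonal.mem_antidiagonal.mp hy
      have : gw a y.1 * csum a y.2 l * x^n
          = (gw a y.1 * x^y.1) * (csum a y.2 l * x^y.2) := by
        rw [← hy', pow_add]
        ring
      rw [this]
      apply mul_le_mul_of_nonneg_left (ih y.2)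
      have := gw_nonneg ha y.1
      positivity
    calc ∑ y ∈ Finset.HasAntidiagonal.antidiagonal n, gw a y.1 * csum a y.2 l * x^n
        ≤ ∑ y ∈ Finset.HasAntidiagonal.antidiagonal n, (gw a y.1 * x^y.1) * g^l :=
          Finset.sum_le_sum hterm
      _ = (∑ y ∈ Finset.HasAntidiagonal.antidiagonal n, gw a y.1 * x^y.1) * g^l := by
          rw [Finset.sum_mul]
      _ ≤ g * g^l := by
          apply mul_le_mul_of_nonneg_right _ (pow_nonneg hgnn l)
          rw [Finset.Nat.sum_antidiagonal_eq_sum_range_succ_mk]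
          rw [Finset.sum_range_succ' _ n]
          simp only [gw_zero, zero_mul, pow_zero, add_zero]
          exact Summable.sum_le_tsum (Finset.range n)
            (fun m _ => by have := gw_nonneg ha (m+1); positivity) hsum
      _ = g^(l+1) := by rw [pow_succ]; ring

lemma Dsum_le {γ0 a p x : ℝ} (hγ : 0 < γ0) (ha : a < 1) (hp : 0 < p)
    (hx0 : 0 < x) (hx1 : x < 1) (n : ℕ) :
    Dsum γ0 a p n * x^n ≤ (n.factorial:ℝ) *
      Real.exp (γ0 * p^(-a) * (∑' m : ℕ, gw a (m+1) * x^(m+1))) := by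
  set g := ∑' m : ℕ, gw a (m+1) * x^(m+1) with hg
  have hgnn : 0 ≤ g := tsum_nonneg (fun m => by
    have := gw_nonneg ha (m+1); positivity)
  have hpa : 0 < p ^ (-a) := Real.rpow_pos_of_pos hp _
  set y := γ0 * p^(-a) * g with hy
  have hynn : 0 ≤ y := by positivity
  rw [Dsum, Finset.sum_mul]
  have hterm : ∀ l ∈ Finset.range (n+1),
      γ0^l * p^(-(a*(l:ℝ))) * genStirling a n l * x^n
        ≤ (n.factorial:ℝ) * (y^l / (l.factorial:ℝ)) := by
    intro l _
    rw [genStirling_eq]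
    have hc := csum_le_tsum ha hx0 hx1 l n
    have hrp : p ^ (-(a * (l:ℝ))) = (p ^ (-a))^l := by
      rw [← Real.rpow_natCast (p ^ (-a)) l, ← Real.rpow_mul hp.le]
      congr 1
      ring
    calc γ0^l * p^(-(a*(l:ℝ))) * ((n.factorial:ℝ)/(l.factorial:ℝ) * csum a n l) * x^n
        = ((n.factorial:ℝ)/(l.factorial:ℝ)) * (γ0^l * (p^(-a))^l) * (csum a n l * x^n) := by
          rw [hrp]; ring
      _ ≤ ((n.factorial:ℝ)/(l.factorial:ℝ)) * (γ0^l * (p^(-a))^l) * g^l := by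
          apply mul_le_mul_of_nonneg_left hc
          positivity
      _ = (n.factorial:ℝ) * (y^l / (l.factorial:ℝ)) := by
          rw [hy, mul_pow, mul_pow]
          ring
  calc ∑ l ∈ Finset.range (n+1), γ0^l * p^(-(a*(l:ℝ))) * genStirling a n l * x^n
      ≤ ∑ l ∈ Finset.range (n+1), (n.factorial:ℝ) * (y^l / (l.factorial:ℝ)) :=
        Finset.sum_le_sum hterm
    _ = (n.factorial:ℝ) * ∑ l ∈ Finset.range (n+1), y^l / (l.factorial:ℝ) := by
        rw [Finset.mul_sum]
    _ ≤ (n.factorial:ℝ) * Real.exp y := by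
        apply mul_le_mul_of_nonneg_left (Real.sum_le_exp_of_nonneg hynn _)
        positivity

/-- Prior Simpson's index of diversity under the generalized negative binomial
process: with c = (1 − (1−p)^a)/(a·p^a),
Σ_{n=2}^∞ [γ0·p^{−a}·R_n(2,2)/R_n(1,1)] · p_N(n)/(1 − p_N(0) − p_N(1))
= [γ0²·p^{−2a}·e^{−γ0c}/(1 − e^{−γ0c} − γ0·p^{1−a}·e^{−γ0c})] · Σ_{n=2}^∞ (p^n/n!)·R_n(2,2),
where both series converge. -/
theorem gnbp_simpson_index (γ0 a p c : ℝ) (hγ : 0 < γ0) (ha : a < 1) (ha0 : a ≠ 0)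
    (hp0 : 0 < p) (hp1 : p < 1) (hc : c = (1 - (1 - p) ^ a) / (a * p ^ a)) :
    Summable (fun n : ℕ =>
      γ0 * p ^ (-a) * Rrec γ0 a p (n + 2) 2 2 / Rrec γ0 a p (n + 2) 1 1 *
        (gnbPMF γ0 a p (n + 2) / (1 - gnbPMF γ0 a p 0 - gnbPMF γ0 a p 1))) ∧
    Summable (fun n : ℕ =>
      p ^ (n + 2) / ((n + 2).factorial : ℝ) * Rrec γ0 a p (n + 2) 2 2) ∧
    (∑' n : ℕ,
        γ0 * p ^ (-a) * Rrec γ0 a p (n + 2) 2 2 / Rrec γ0 a p (n + 2) 1 1 *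
          (gnbPMF γ0 a p (n + 2) / (1 - gnbPMF γ0 a p 0 - gnbPMF γ0 a p 1)))
      = γ0 ^ 2 * p ^ (-(2 * a)) * Real.exp (-γ0 * c) /
          (1 - Real.exp (-γ0 * c) - γ0 * p ^ (1 - a) * Real.exp (-γ0 * c)) *
        ∑' n : ℕ, p ^ (n + 2) / ((n + 2).factorial : ℝ) * Rrec γ0 a p (n + 2) 2 2 := by
  have hpa : 0 < p ^ (-a) := Real.rpow_pos_of_pos hp0 _
  have hxq : 0 < γ0 * p ^ (-a) := mul_pos hγ hpa
  -- the pmf values at 0 and 1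
  set E := Real.exp (-γ0 * c) with hEdef
  have hE : Real.exp (-γ0 * (1 - (1 - p) ^ a) / (a * p ^ a)) = E := by
    rw [hEdef]
    congr 1
    rw [hc, mul_div_assoc]
  have hD0 : Dsum γ0 a p 0 = 1 := by
    rw [Dsum]
    simp [genStirling_zero_zero]
  have hD1 : Dsum γ0 a p 1 = γ0 * p ^ (-a) := by
    rw [Dsum, Finset.sum_range_succ, Finset.sum_range_one]
    rw [genStirling_succ_zero, genStirling_one_one ha]
    norm_num
  have hp0v : gnbPMF γ0 a p 0 = E := by
    rw [gnbPMF, hD0, hE]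
    norm_num
  have hp1sub : p ^ ((1:ℝ) - a) = p * p ^ (-a) := by
    have : (1:ℝ) - a = 1 + (-a) := by ring
    rw [this, Real.rpow_add hp0, Real.rpow_one]
  have hp1v : gnbPMF γ0 a p 1 = γ0 * p ^ ((1:ℝ) - a) * E := by
    rw [gnbPMF, hD1, hE, hp1sub]
    norm_num
    ring
  have hd : 1 - gnbPMF γ0 a p 0 - gnbPMF γ0 a p 1 = 1 - E - γ0 * p ^ ((1:ℝ) - a) * E := by
    rw [hp0v, hp1v]
  set d := 1 - E - γ0 * p ^ ((1:ℝ) - a) * E with hddef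
  set C := γ0 ^ 2 * p ^ (-(2 * a)) * E / d with hCdef
  set f : ℕ → ℝ := fun m => p ^ (m + 2) / ((m + 2).factorial : ℝ) * Rrec γ0 a p (m + 2) 2 2
    with hfdef
  have h2a : p ^ (-a) * p ^ (-a) = p ^ (-(2 * a)) := by
    rw [← Real.rpow_add hp0]
    congr 1
    ring
  -- positivity facts
  have hR11pos : ∀ m : ℕ, 0 < Rrec γ0 a p (m+2) 1 1 := fun m =>
    Rrec_pos hγ ha hp0 (m+2) (m+2) 1 1 (by omega) (by omega) (by omega)
  have hR21pos : ∀ m : ℕ, 0 < Rrec γ0 a p (m+2) 2 1 := fun m =>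
    Rrec_pos hγ ha hp0 (m+2) (m+2) 2 1 (by omega) (by omega) (by omega)
  have hR22pos : ∀ m : ℕ, 0 < Rrec γ0 a p (m+2) 2 2 := fun m =>
    Rrec_pos hγ ha hp0 (m+2) (m+2) 2 2 (by omega) (by omega) (by omega)
  -- the key pointwise identity
  have key : ∀ m : ℕ,
      γ0 * p ^ (-a) * Rrec γ0 a p (m + 2) 2 2 / Rrec γ0 a p (m + 2) 1 1 *
        (gnbPMF γ0 a p (m + 2) / (1 - gnbPMF γ0 a p 0 - gnbPMF γ0 a p 1)) = C * f m := by
    intro m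
    have hDn : Dsum γ0 a p (m+2) = γ0 * p ^ (-a) * Rrec γ0 a p (m+2) 1 1 :=
      Dsum_eq ha hp0 (m+1)
    rw [hd, gnbPMF, hE, hDn, hCdef, hfdef]
    have hne : Rrec γ0 a p (m+2) 1 1 ≠ 0 := (hR11pos m).ne'
    have hinv : (Rrec γ0 a p (m+2) 1 1)⁻¹ * Rrec γ0 a p (m+2) 1 1 = 1 := inv_mul_cancel₀ hne
    rw [← h2a]
    set R11 := Rrec γ0 a p (m+2) 1 1
    set R22 := Rrec γ0 a p (m+2) 2 2
    set A := p ^ (m + 2) / ((m + 2).factorial : ℝ)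
    linear_combination (γ0 * γ0 * p ^ (-a) * p ^ (-a) * A * E * R22 / d) * hinv
  -- the comparison bound
  obtain ⟨x, hxdef⟩ : ∃ x : ℝ, x = (1 + p)/2 := ⟨_, rfl⟩
  have hx0 : 0 < x := by rw [hxdef]; linarith
  have hx1 : x < 1 := by rw [hxdef]; linarith
  have hpx : p < x := by rw [hxdef]; linarith
  have hpxlt : p / x < 1 := (div_lt_one hx0).mpr hpx
  have hpxnn : 0 ≤ p / x := by positivity
  set K := Real.exp (γ0 * p^(-a) * (∑' m : ℕ, gw a (m+1) * x^(m+1))) with hKdef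
  have hKpos : 0 < K := Real.exp_pos _
  have hfnn : ∀ m : ℕ, 0 ≤ f m := fun m => by
    have := (hR22pos m).le
    have hfp : (0:ℝ) < ((m+2).factorial : ℝ) := by exact_mod_cast (m+2).factorial_pos
    positivity
  have hfle : ∀ m : ℕ, f m ≤ (p/x)^(m+2) * (K / (γ0 * p^(-a))^2) := by
    intro m
    have hDn : Dsum γ0 a p (m+2) = γ0 * p ^ (-a) * Rrec γ0 a p (m+2) 1 1 :=
      Dsum_eq ha hp0 (m+1)
    -- R22 ≤ R11 / xq
    have hunfold := Rrec_of_lt γ0 a p (n := m+2) (i := 1) (by omega) 1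
    have hR2122 : γ0 * p ^ (-a) * Rrec γ0 a p (m+2) 2 2 ≤ Rrec γ0 a p (m+2) 1 1 := by
      rw [hunfold]
      have h1 : 0 ≤ ((1:ℝ) - a * (1:ℕ)) * Rrec γ0 a p (m+2) 2 1 := by
        apply mul_nonneg _ (hR21pos m).le
        push_cast
        linarith
      push_cast at h1 ⊢
      linarith
    -- Dsum bound
    have hDle := Dsum_le hγ ha hp0 hx0 hx1 (m+2)
    rw [← hKdef] at hDle
    have hfac : (0:ℝ) < ((m+2).factorial : ℝ) := by exact_mod_cast (m+2).factorial_pos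
    have hxp : (0:ℝ) < x^(m+2) := pow_pos hx0 _
    have hR22 : Rrec γ0 a p (m+2) 2 2 ≤ Dsum γ0 a p (m+2) / (γ0 * p^(-a))^2 := by
      rw [hDn, le_div_iff₀ (by positivity)]
      calc Rrec γ0 a p (m+2) 2 2 * (γ0 * p^(-a))^2
          = (γ0 * p ^ (-a)) * (γ0 * p ^ (-a) * Rrec γ0 a p (m+2) 2 2) := by ring
        _ ≤ (γ0 * p ^ (-a)) * Rrec γ0 a p (m+2) 1 1 :=
            mul_le_mul_of_nonneg_left hR2122 hxq.le
    have hDx : Dsum γ0 a p (m+2) ≤ ((m+2).factorial : ℝ) * K / x^(m+2) := by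
      rw [le_div_iff₀ hxp]
      exact hDle
    calc f m = p ^ (m + 2) / ((m + 2).factorial : ℝ) * Rrec γ0 a p (m + 2) 2 2 := rfl
      _ ≤ p ^ (m + 2) / ((m + 2).factorial : ℝ) * (Dsum γ0 a p (m+2) / (γ0 * p^(-a))^2) := by
          apply mul_le_mul_of_nonneg_left hR22
          positivity
      _ ≤ p ^ (m + 2) / ((m + 2).factorial : ℝ) *
            ((((m+2).factorial : ℝ) * K / x^(m+2)) / (γ0 * p^(-a))^2) := by
          apply mul_le_mul_of_nonneg_left _ (by positivity)
          exact (div_le_div_iff_of_pos_right (by positivity)).mpr hDx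
      _ = (p/x)^(m+2) * (K / (γ0 * p^(-a))^2) := by
          rw [div_pow]
          have h5 : p ^ (m + 2) / ((m + 2).factorial : ℝ) *
              ((((m+2).factorial : ℝ) * K / x^(m+2)) / (γ0 * p^(-a))^2)
              = (p^(m+2)/x^(m+2)) * (K / (γ0 * p^(-a))^2) *
                (((m+2).factorial : ℝ) / ((m+2).factorial : ℝ)) := by ring
          rw [h5, div_self hfac.ne', mul_one]
  have hg0 : Summable (fun m : ℕ => (p/x)^(m+2)) := by
    have hg := summable_geometric_of_lt_one hpxnn hpxlt
    exact (hg.mul_left ((p/x)^2)).congr (fun m => by rw [pow_add]; ring)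
  have hgeom := hg0.mul_right (K / (γ0 * p^(-a))^2)
  have hS2 : Summable f := Summable.of_nonneg_of_le hfnn hfle hgeom
  have hS1 : Summable (fun m : ℕ =>
      γ0 * p ^ (-a) * Rrec γ0 a p (m + 2) 2 2 / Rrec γ0 a p (m + 2) 1 1 *
        (gnbPMF γ0 a p (m + 2) / (1 - gnbPMF γ0 a p 0 - gnbPMF γ0 a p 1))) :=
    (hS2.mul_left C).congr (fun m => (key m).symm)
  refine ⟨hS1, hS2, ?_⟩
  rw [tsum_congr key, tsum_mul_left]
end
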